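/- arXiv:1609.09272 — 3 statements merged into one kernel-verified Lean document; each statement's English description precedes it below -/
import Mathlib

section
/- Suppose c = (c_0, …, c_n) ∈ 𝔠₊(N) and P ∈ 𝔓₊(N). Then there exists a unique Q ∈ 𝔓₊(N) such that the rational function Φ := P/Q on the discrete unit circle satisfies the moment conditions (1/2N) Σ_{j=−N+1}^N ζ_j^k P(ζ_j)/Q(ζ_j) = c_k for k = 0, 1, …, n. -/
open Finset Complex Matrix

noncomputable section

/-- The point `ζ_j = exp(iπ j / N)` of the discrete unit circle `𝕋_{2N}`. -/
def zeta (N : ℕ) (j : ℤ) : ℂ := Complex.exp (Real.pi * Complex.I * j / N)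

/-- The index set `j = -N+1, …, N`. -/
def Idx (N : ℕ) : Finset ℤ := Finset.Icc (-(N : ℤ) + 1) (N : ℤ)

/-- The symmetric pseudo-polynomial `Σ_{k=-n}^n p_{|k|} ζ^{-k}`
(equals `p 0 + Σ_{k=1}^n p k (ζ^k + ζ^{-k})`). -/
def ppC {n : ℕ} (p : Fin (n + 1) → ℝ) (z : ℂ) : ℂ :=
  ∑ k : Fin (n + 1), (p k : ℂ) * (z ^ (k.val : ℤ) + z ^ (-(k.val : ℤ))) - (p 0 : ℂ)

/-- Membership in the cone `𝔓₊(N)`: positivity on the discrete unit circle. -/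
def memPplus (N : ℕ) {n : ℕ} (p : Fin (n + 1) → ℝ) : Prop :=
  ∀ j ∈ Idx N, 0 < (ppC p (zeta N j)).re

/-- The pairing `⟨c, p⟩ = Σ_{k=-n}^n c_{|k|} p_{|k|}`. -/
def pairCP {n : ℕ} (c p : Fin (n + 1) → ℝ) : ℝ :=
  2 * ∑ k : Fin (n + 1), c k * p k - c 0 * p 0

/-- Membership in the dual cone `𝔠₊(N)`. -/
def memCplus (N : ℕ) {n : ℕ} (c : Fin (n + 1) → ℝ) : Prop :=
  ∀ p : Fin (n + 1) → ℝ, p ≠ 0 →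
    (∀ j ∈ Idx N, 0 ≤ (ppC p (zeta N j)).re) → 0 < pairCP c p

namespace S0


lemma zeta_ne_zero (N : ℕ) (j : ℤ) : zeta N j ≠ 0 := Complex.exp_ne_zero _

lemma zeta_zpow (N : ℕ) (j m : ℤ) : (zeta N j) ^ m = zeta N (j * m) := by
  rw [zeta, zeta, ← Complex.exp_int_mul]
  congr 1
  push_cast
  ring

lemma zeta_mul (N : ℕ) (j j' : ℤ) : zeta N j * zeta N j' = zeta N (j + j') := by
  rw [zeta, zeta, zeta, ← Complex.exp_add]
  congr 1
  push_cast
  ring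

lemma zeta_zero (N : ℕ) : zeta N 0 = 1 := by simp [zeta]

lemma conj_zeta (N : ℕ) (j : ℤ) : (starRingEnd ℂ) (zeta N j) = zeta N (-j) := by
  rw [zeta, zeta, ← Complex.exp_conj]
  congr 1
  simp [map_div₀, Complex.conj_I]

lemma norm_zeta (N : ℕ) (j : ℤ) : ‖zeta N j‖ = 1 := by
  have : (Real.pi : ℂ) * Complex.I * j / N = ((Real.pi * j / N : ℝ) : ℂ) * Complex.I := by
    push_cast; ring
  rw [zeta, this, Complex.norm_exp_ofReal_mul_I]

lemma zeta_periodic (N : ℕ) (hN : 0 < N) (j : ℤ) : zeta N (j + 2 * N) = zeta N j := by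
  have hN' : (N : ℂ) ≠ 0 := by exact_mod_cast hN.ne'
  rw [zeta, zeta]
  push_cast
  have : (Real.pi : ℂ) * Complex.I * ((j : ℂ) + 2 * N) / N
      = Real.pi * Complex.I * j / N + (1 : ℤ) * (2 * Real.pi * Complex.I) := by
    field_simp
    ring
  rw [this, Complex.exp_add, Complex.exp_int_mul_two_pi_mul_I, mul_one]

lemma conj_zeta_zpow (N : ℕ) (j m : ℤ) :
    (starRingEnd ℂ) ((zeta N j) ^ m) = (zeta N j) ^ (-m) := by
  rw [map_zpow₀, conj_zeta, zeta_zpow, zeta_zpow]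
  ring_nf




lemma zeta_eq_one_iff (N : ℕ) (hN : 0 < N) (m : ℤ) :
    zeta N m = 1 ↔ (2 * (N : ℤ)) ∣ m := by
  have hNC : (N : ℂ) ≠ 0 := by exact_mod_cast hN.ne'
  have hpi : (Real.pi : ℂ) ≠ 0 := by exact_mod_cast Real.pi_ne_zero
  rw [zeta, Complex.exp_eq_one_iff]
  constructor
  · rintro ⟨t, ht⟩
    refine ⟨t, ?_⟩
    have : (m : ℂ) = ((2 * N * t : ℤ) : ℂ) := by
      field_simp at ht
      push_cast
      have hI : Complex.I ≠ 0 := Complex.I_ne_zero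
      have h2 : (Real.pi : ℂ) * Complex.I * m = Real.pi * Complex.I * (2 * t * N) := by
        rw [ht]; ring
      have := mul_left_cancel₀ (mul_ne_zero hpi hI) h2
      rw [this]; ring
    exact_mod_cast this
  · rintro ⟨t, rfl⟩
    refine ⟨t, ?_⟩
    push_cast
    field_simp

lemma sum_zeta_pow (N : ℕ) (hN : 0 < N) (m : ℤ) :
    ∑ j ∈ Idx N, (zeta N j) ^ m = if (2 * (N : ℤ)) ∣ m then (2 * N : ℂ) else 0 := by
  have hrw : ∀ j : ℤ, (zeta N j) ^ m = (zeta N m) ^ j := by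
    intro j; rw [zeta_zpow, zeta_zpow, mul_comm]
  simp only [hrw]
  by_cases hdvd : (2 * (N : ℤ)) ∣ m
  · rw [if_pos hdvd, (zeta_eq_one_iff N hN m).2 hdvd]
    simp [Idx, Int.card_Icc]
    have : ((N : ℤ) + N).toNat = 2 * N := by omega
    rw [this]; push_cast; ring
  · rw [if_neg hdvd]
    have hω : zeta N m ≠ 1 := fun h => hdvd ((zeta_eq_one_iff N hN m).1 h)
    have himg : Idx N = (Finset.range (2 * N)).image (fun i : ℕ => (-(N : ℤ) + 1) + i) := by
      ext j
      simp only [Idx, Finset.mem_Icc, Finset.mem_image, Finset.mem_range]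
      constructor
      · rintro ⟨h1, h2⟩
        exact ⟨(j + N - 1).toNat, by omega, by omega⟩
      · rintro ⟨i, hi, rfl⟩
        omega
    rw [himg, Finset.sum_image (by intro a _ b _ h; simp only at h; omega)]
    have : ∀ i : ℕ, (zeta N m) ^ ((-(N : ℤ) + 1) + i) = (zeta N m) ^ (-(N:ℤ)+1) * (zeta N m) ^ i := by
      intro i
      rw [zpow_add₀ (zeta_ne_zero N m), zpow_natCast]
    simp only [this, ← Finset.mul_sum]
    rw [geom_sum_eq hω]
    have h2N : (zeta N m) ^ (2 * N) = 1 := by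
      rw [← zpow_natCast, zeta_zpow]
      refine (zeta_eq_one_iff N hN _).2 ⟨m, by push_cast; ring⟩
    rw [h2N]
    simp



lemma coeff_extract {n : ℕ} (N : ℕ) (hNn : n < N) (p : Fin (n+1) → ℝ) (k : Fin (n+1)) :
    ∑ j ∈ Idx N, (zeta N j) ^ (k.val : ℤ) * ppC p (zeta N j) = (2 * N : ℂ) * (p k : ℂ) := by
  have hN : 0 < N := lt_of_le_of_lt (Nat.zero_le n) hNn
  set K : ℤ := (k.val : ℤ) with hK
  have step1 : ∑ j ∈ Idx N, (zeta N j) ^ K * ppC p (zeta N j)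
      = ∑ j ∈ Idx N, ((∑ k' : Fin (n+1), (p k' : ℂ) *
          ((zeta N j) ^ (K + k'.val) + (zeta N j) ^ (K - k'.val)))
        - (p 0 : ℂ) * (zeta N j) ^ K) := by
    refine Finset.sum_congr rfl fun j _ => ?_
    have hz := zeta_ne_zero N j
    rw [ppC, mul_sub, Finset.mul_sum]
    congr 1
    · refine Finset.sum_congr rfl fun k' _ => ?_
      rw [show K + (k'.val : ℤ) = K + (k'.val : ℤ) from rfl, zpow_add₀ hz,
        show K - (k'.val : ℤ) = K + (-(k'.val : ℤ)) by ring, zpow_add₀ hz]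
      ring
    · ring
  rw [step1, Finset.sum_sub_distrib, Finset.sum_comm]
  have step2 : ∀ k' : Fin (n+1),
      ∑ j ∈ Idx N, (p k' : ℂ) * ((zeta N j) ^ (K + k'.val) + (zeta N j) ^ (K - k'.val))
      = (p k' : ℂ) * ((if (2*(N:ℤ)) ∣ (K + k'.val) then (2*N:ℂ) else 0)
          + (if (2*(N:ℤ)) ∣ (K - k'.val) then (2*N:ℂ) else 0)) := by
    intro k'
    rw [← Finset.mul_sum, Finset.sum_add_distrib, sum_zeta_pow N hN, sum_zeta_pow N hN]
  simp only [step2, ← Finset.mul_sum]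
  rw [sum_zeta_pow N hN]
  -- now close with case analysis
  have hkb : (k.val : ℤ) ≤ n := by exact_mod_cast Nat.le_of_lt_succ k.isLt
  by_cases hk : k = 0
  · subst hk
    have hKz : K = 0 := by simp [hK]
    have h1 : ∀ k' : Fin (n+1),
        ((if (2*(N:ℤ)) ∣ (K + k'.val) then (2*N:ℂ) else 0)
          + (if (2*(N:ℤ)) ∣ (K - k'.val) then (2*N:ℂ) else 0))
        = if k' = 0 then (4*N:ℂ) else 0 := by
      intro k'
      have hb : (k'.val : ℤ) ≤ n := by exact_mod_cast Nat.le_of_lt_succ k'.isLt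
      by_cases h0 : k' = 0
      · subst h0; simp [hKz]
        ring
      · have hne : (k'.val : ℤ) ≠ 0 := by
          exact_mod_cast fun h : (k'.val : ℕ) = 0 => h0 (Fin.ext (by simp [h]))
        rw [if_neg h0, if_neg, if_neg]
        · norm_num
        · intro hd
          have := Int.eq_zero_of_dvd_of_natAbs_lt_natAbs hd (by omega)
          omega
        · intro hd
          have := Int.eq_zero_of_dvd_of_natAbs_lt_natAbs hd (by omega)
          omega
    simp only [h1, mul_ite, mul_zero]
    rw [Finset.sum_ite_eq' Finset.univ (0 : Fin (n+1)) (fun k' => (p k' : ℂ) * (4*N:ℂ))]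
    simp [hKz]
    ring
  · have hKpos : 0 < K := by
      have : k.val ≠ 0 := fun h => hk (Fin.ext h)
      omega
    have h1 : ∀ k' : Fin (n+1),
        ((if (2*(N:ℤ)) ∣ (K + k'.val) then (2*N:ℂ) else 0)
          + (if (2*(N:ℤ)) ∣ (K - k'.val) then (2*N:ℂ) else 0))
        = if k' = k then (2*N:ℂ) else 0 := by
      intro k'
      have hb : (k'.val : ℤ) ≤ n := by exact_mod_cast Nat.le_of_lt_succ k'.isLt
      have hA : ¬ (2*(N:ℤ)) ∣ (K + k'.val) := by
        intro hd
        have := Int.eq_zero_of_dvd_of_natAbs_lt_natAbs hd (by omega)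
        omega
      rw [if_neg hA]
      by_cases hkk : k' = k
      · subst hkk
        simp [hK]
      · have hne : (k'.val : ℤ) ≠ K := by
          intro h
          rw [hK] at h
          have hvv : k'.val = k.val := by exact_mod_cast h
          exact hkk (Fin.ext hvv)
        rw [if_neg hkk, if_neg]
        · norm_num
        · intro hd
          have := Int.eq_zero_of_dvd_of_natAbs_lt_natAbs hd (by omega)
          omega
    simp only [h1, mul_ite, mul_zero]
    rw [Finset.sum_ite_eq' Finset.univ k (fun k' => (p k' : ℂ) * (2*N:ℂ))]
    have hKn : ¬ (2*(N:ℤ)) ∣ K := by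
      intro hd
      have := Int.eq_zero_of_dvd_of_natAbs_lt_natAbs hd (by omega)
      omega
    rw [if_neg hKn]
    simp
    ring



/-- `w N j k = 2 cos(π k j / N)`. -/
def wR (N : ℕ) (j : ℤ) (k : ℕ) : ℝ := ((zeta N j) ^ (k : ℤ) + (zeta N j) ^ (-(k : ℤ))).re

/-- real value of the pseudopolynomial on the grid, as an explicit linear expression. -/
def Qr {n : ℕ} (N : ℕ) (p : Fin (n+1) → ℝ) (j : ℤ) : ℝ :=
  (∑ k : Fin (n+1), p k * wR N j k.val) - p 0

lemma Qr_spec {n : ℕ} (N : ℕ) (p : Fin (n+1) → ℝ) (j : ℤ) :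
    (ppC p (zeta N j)).re = Qr N p j := by
  simp [ppC, Qr, wR, Complex.sub_re, Complex.re_sum]

lemma ppC_conj_self {n : ℕ} (N : ℕ) (p : Fin (n+1) → ℝ) (j : ℤ) :
    (starRingEnd ℂ) (ppC p (zeta N j)) = ppC p (zeta N j) := by
  rw [ppC, map_sub, map_sum]
  congr 1
  · refine Finset.sum_congr rfl fun k _ => ?_
    rw [_root_.map_mul, map_add, Complex.conj_ofReal, conj_zeta_zpow, conj_zeta_zpow, neg_neg,
      add_comm ((zeta N j) ^ (-(k.val:ℤ)))]
  · exact Complex.conj_ofReal _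

lemma ppC_real {n : ℕ} (N : ℕ) (p : Fin (n+1) → ℝ) (j : ℤ) :
    ppC p (zeta N j) = ((ppC p (zeta N j)).re : ℂ) :=
  (Complex.conj_eq_iff_re.1 (ppC_conj_self N p j)).symm

lemma ppC_neg {n : ℕ} (N : ℕ) (p : Fin (n+1) → ℝ) (j : ℤ) :
    ppC p (zeta N (-j)) = ppC p (zeta N j) := by
  have h : zeta N (-j) = (starRingEnd ℂ) (zeta N j) := (conj_zeta N j).symm
  have h2 : ppC p ((starRingEnd ℂ) (zeta N j)) = (starRingEnd ℂ) (ppC p (zeta N j)) := by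
    rw [ppC, ppC, map_sub, map_sum]
    congr 1
    · refine Finset.sum_congr rfl fun k _ => ?_
      rw [_root_.map_mul, map_add, Complex.conj_ofReal, ← map_zpow₀, ← map_zpow₀]
    · exact (Complex.conj_ofReal _).symm
  rw [h, h2, ppC_conj_self]

lemma ppC_periodic {n : ℕ} (N : ℕ) (hN : 0 < N) (p : Fin (n+1) → ℝ) (j : ℤ) :
    ppC p (zeta N (j + 2 * N)) = ppC p (zeta N j) := by
  rw [zeta_periodic N hN j]

lemma wR_eq (N : ℕ) (j : ℤ) (k : ℕ) :
    wR N j k = 2 * ((zeta N j) ^ (k : ℤ)).re := by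
  rw [wR, ← conj_zeta_zpow]
  rw [Complex.add_conj]
  simp

lemma abs_wR_le (N : ℕ) (j : ℤ) (k : ℕ) : |wR N j k| ≤ 2 := by
  rw [wR_eq, abs_mul]
  have habs2 : |(2:ℝ)| = 2 := by norm_num
  rw [habs2]
  have h1 : |((zeta N j) ^ (k:ℤ)).re| ≤ ‖(zeta N j) ^ (k:ℤ)‖ :=
    Complex.abs_re_le_norm _
  have h2 : ‖(zeta N j) ^ (k:ℤ)‖ = 1 := by
    rw [norm_zpow, norm_zeta, _root_.one_zpow]
  nlinarith
-- linearity
lemma Qr_add {n : ℕ} (N : ℕ) (p q : Fin (n+1) → ℝ) (j : ℤ) :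
    Qr N (p + q) j = Qr N p j + Qr N q j := by
  simp [Qr, add_mul, Finset.sum_add_distrib]; ring

lemma Qr_smul {n : ℕ} (N : ℕ) (t : ℝ) (p : Fin (n+1) → ℝ) (j : ℤ) :
    Qr N (t • p) j = t * Qr N p j := by
  simp [Qr, mul_sum, mul_assoc, mul_sub]

lemma Qr_zero {n : ℕ} (N : ℕ) (j : ℤ) : Qr N (0 : Fin (n+1) → ℝ) j = 0 := by
  simp [Qr]

lemma pairCP_smul {n : ℕ} (c : Fin (n+1) → ℝ) (t : ℝ) (p : Fin (n+1) → ℝ) :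
    pairCP c (t • p) = t * pairCP c p := by
  simp only [pairCP, Pi.smul_apply, smul_eq_mul]
  have h : ∑ k : Fin (n+1), c k * (t * p k) = t * ∑ k : Fin (n+1), c k * p k := by
    rw [Finset.mul_sum]
    exact Finset.sum_congr rfl fun k _ => by ring
  rw [h]; ring

lemma pairCP_add {n : ℕ} (c p q : Fin (n+1) → ℝ) :
    pairCP c (p + q) = pairCP c p + pairCP c q := by
  simp [pairCP, mul_add, Finset.sum_add_distrib]; ring

lemma Qr_bound {n : ℕ} (N : ℕ) (p : Fin (n+1) → ℝ) (j : ℤ) :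
    |Qr N p j| ≤ (2 * (n+1) + 1) * ‖p‖ := by
  have habs : ∀ k : Fin (n+1), |p k| ≤ ‖p‖ := fun k => by
    have := norm_le_pi_norm p k
    simpa using this
  have hnn : (0:ℝ) ≤ ‖p‖ := norm_nonneg p
  calc |Qr N p j| = |(∑ k : Fin (n+1), p k * wR N j k.val) + (- p 0)| := by
        rw [Qr, sub_eq_add_neg]
    _ ≤ |∑ k : Fin (n+1), p k * wR N j k.val| + |(- p 0)| := abs_add_le _ _
    _ ≤ (∑ k : Fin (n+1), |p k * wR N j k.val|) + |p 0| := by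
        rw [abs_neg]
        exact add_le_add (Finset.abs_sum_le_sum_abs _ _) le_rfl
    _ ≤ (∑ _k : Fin (n+1), ‖p‖ * 2) + ‖p‖ := by
        refine add_le_add ?_ (habs 0)
        refine Finset.sum_le_sum fun k _ => ?_
        rw [abs_mul]
        exact mul_le_mul (habs k) (abs_wR_le N j k.val) (abs_nonneg _) hnn
    _ = (2 * (n+1) + 1) * ‖p‖ := by
        rw [Finset.sum_const, Finset.card_univ, Fintype.card_fin]
        push_cast; ring

-- injectivity
lemma Qr_inj {n : ℕ} (N : ℕ) (hNn : n < N) (p : Fin (n+1) → ℝ)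
    (h : ∀ j ∈ Idx N, Qr N p j = 0) : p = 0 := by
  have hN : 0 < N := lt_of_le_of_lt (Nat.zero_le n) hNn
  funext k
  have h2 := coeff_extract N hNn p k
  rw [Finset.sum_congr rfl (fun j hj => by
    rw [ppC_real N p j, Qr_spec, h j hj, Complex.ofReal_zero, mul_zero])] at h2
  have hNe : (2 * N : ℂ) ≠ 0 := by
    have : (N:ℂ) ≠ 0 := by exact_mod_cast hN.ne'
    simp [this]
  rw [Finset.sum_const, smul_zero] at h2
  have : (p k : ℂ) = 0 := by
    field_simp at h2
    rcases mul_eq_zero.1 h2.symm with h | h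
    · exact absurd h hNe
    · exact h
  exact_mod_cast this



lemma sum_shift (N : ℕ) (hN : 0 < N) (f : ℤ → ℂ)
    (hper : ∀ j, f (j + 2 * N) = f j) :
    ∑ j ∈ Idx N, f (-j) = ∑ j ∈ Idx N, f j := by
  have himg : (Idx N).image (fun j : ℤ => -j) = Finset.Icc (-(N:ℤ)) ((N:ℤ) - 1) := by
    ext j
    simp only [Idx, Finset.mem_image, Finset.mem_Icc]
    constructor
    · rintro ⟨a, ⟨h1, h2⟩, rfl⟩; omega
    · rintro ⟨h1, h2⟩; exact ⟨-j, by omega, by omega⟩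
  have h1 : ∑ j ∈ Idx N, f (-j) = ∑ j ∈ Finset.Icc (-(N:ℤ)) ((N:ℤ) - 1), f j := by
    rw [← himg, Finset.sum_image (by intro a _ b _ h; simp only at h; omega)]
  have hmid : -(N:ℤ) + 1 ≤ (N:ℤ) - 1 + 1 := by omega
  have h2 : Finset.Icc (-(N:ℤ)) ((N:ℤ) - 1) =
      insert (-(N:ℤ)) (Finset.Icc (-(N:ℤ) + 1) ((N:ℤ) - 1)) := by
    ext j; simp only [Finset.mem_insert, Finset.mem_Icc]; omega
  have h3 : Idx N = insert (N:ℤ) (Finset.Icc (-(N:ℤ) + 1) ((N:ℤ) - 1)) := by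
    ext j; simp only [Idx, Finset.mem_insert, Finset.mem_Icc]; omega
  have hnm1 : (-(N:ℤ)) ∉ Finset.Icc (-(N:ℤ) + 1) ((N:ℤ) - 1) := by
    simp only [Finset.mem_Icc]; omega
  have hnm2 : ((N:ℤ)) ∉ Finset.Icc (-(N:ℤ) + 1) ((N:ℤ) - 1) := by
    simp only [Finset.mem_Icc]; omega
  have hfN : f (-(N:ℤ)) = f (N:ℤ) := by
    have := hper (-(N:ℤ))
    rw [show (-(N:ℤ) + 2 * N) = (N:ℤ) by ring] at this
    exact this.symm
  rw [h1, h2, Finset.sum_insert hnm1, h3, Finset.sum_insert hnm2, hfN]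

lemma sum_real (N : ℕ) (hN : 0 < N) (K : ℤ) (x : ℤ → ℝ)
    (hsym : ∀ j, x (-j) = x j) (hper : ∀ j, x (j + 2 * N) = x j) :
    ∑ j ∈ Idx N, (zeta N j) ^ K * (x j : ℂ)
      = ((∑ j ∈ Idx N, ((zeta N j) ^ K).re * x j : ℝ) : ℂ) := by
  set f : ℤ → ℂ := fun j => (zeta N j) ^ K * (x j : ℂ) with hf
  have hfper : ∀ j, f (j + 2 * N) = f j := by
    intro j
    simp only [hf]
    rw [zeta_periodic N hN j, hper]
  have hconj : ∀ j, (starRingEnd ℂ) (f j) = f (-j) := by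
    intro j
    simp only [hf]
    rw [_root_.map_mul, Complex.conj_ofReal, conj_zeta_zpow, hsym j,
      zeta_zpow, zeta_zpow, show j * -K = -j * K by ring]
  have hS : (starRingEnd ℂ) (∑ j ∈ Idx N, f j) = ∑ j ∈ Idx N, f j := by
    rw [map_sum]
    calc ∑ j ∈ Idx N, (starRingEnd ℂ) (f j) = ∑ j ∈ Idx N, f (-j) :=
          Finset.sum_congr rfl fun j _ => hconj j
      _ = ∑ j ∈ Idx N, f j := sum_shift N hN f hfper
  have hre := Complex.conj_eq_iff_re.1 hS
  rw [← hre]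
  congr 1
  rw [Complex.re_sum]
  refine Finset.sum_congr rfl fun j _ => ?_
  simp [hf, Complex.mul_re]

lemma pair_of_moments {n : ℕ} (N : ℕ) (c : Fin (n+1) → ℝ) (x : ℤ → ℝ)
    (hmom : ∀ k : Fin (n+1),
      ∑ j ∈ Idx N, ((zeta N j) ^ (k.val : ℤ)).re * x j = 2 * N * c k)
    (v : Fin (n+1) → ℝ) :
    ∑ j ∈ Idx N, x j * Qr N v j = 2 * N * pairCP c v := by
  have hw : ∀ k : Fin (n+1), ∑ j ∈ Idx N, wR N j k.val * x j = 2 * (2 * N * c k) := by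
    intro k
    rw [← hmom k, Finset.mul_sum]
    exact Finset.sum_congr rfl fun j _ => by rw [wR_eq]; ring
  have hx : ∑ j ∈ Idx N, x j = 2 * N * c 0 := by
    have h0 := hmom 0
    simpa using h0
  calc ∑ j ∈ Idx N, x j * Qr N v j
      = ∑ j ∈ Idx N, ((∑ k : Fin (n+1), v k * (wR N j k.val * x j)) - v 0 * x j) := by
        refine Finset.sum_congr rfl fun j _ => ?_
        rw [Qr, mul_sub, Finset.mul_sum]
        congr 1
        · exact Finset.sum_congr rfl fun k _ => by ring
        · ring
    _ = (∑ k : Fin (n+1), v k * ∑ j ∈ Idx N, wR N j k.val * x j)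
        - v 0 * ∑ j ∈ Idx N, x j := by
        rw [Finset.sum_sub_distrib, Finset.sum_comm, ← Finset.mul_sum]
        congr 1
        exact Finset.sum_congr rfl fun k _ => (Finset.mul_sum _ _ _).symm
    _ = 2 * N * pairCP c v := by
        rw [hx]
        have : ∀ k : Fin (n+1), v k * (2 * (2 * N * c k)) = 2 * N * (2 * (c k * v k)) :=
          fun k => by ring
        rw [Finset.sum_congr rfl fun k _ => by rw [hw k]]
        rw [Finset.sum_congr rfl fun k _ => this k, ← Finset.mul_sum, pairCP, ← Finset.mul_sum]
        ring

lemma Qr_single {n : ℕ} (N : ℕ) (k : Fin (n+1)) (j : ℤ) :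
    Qr N (Pi.single k (1:ℝ)) j = wR N j k.val - (if k = 0 then 1 else 0) := by
  rw [Qr]
  congr 1
  · rw [Finset.sum_eq_single k]
    · simp
    · intro b _ hb
      simp [Pi.single_apply, hb]
    · intro h; exact absurd (Finset.mem_univ k) h
  · simp [Pi.single_apply]
    by_cases h : k = 0
    · subst h; simp
    · rw [if_neg (fun hh : (0:Fin (n+1)) = k => h hh.symm), if_neg h]

lemma pairCP_single {n : ℕ} (c : Fin (n+1) → ℝ) (k : Fin (n+1)) :
    pairCP c (Pi.single k (1:ℝ)) = 2 * c k - (if k = 0 then c 0 else 0) := by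
  rw [pairCP]
  congr 1
  · congr 1
    rw [Finset.sum_eq_single k]
    · simp
    · intro b _ hb; simp [Pi.single_apply, hb]
    · intro h; exact absurd (Finset.mem_univ k) h
  · simp [Pi.single_apply, eq_comm]

lemma moments_of_pair {n : ℕ} (N : ℕ) (c : Fin (n+1) → ℝ) (x : ℤ → ℝ)
    (hpair : ∀ v : Fin (n+1) → ℝ, 2 * N * pairCP c v = ∑ j ∈ Idx N, x j * Qr N v j) :
    ∀ k : Fin (n+1),
      ∑ j ∈ Idx N, ((zeta N j) ^ (k.val : ℤ)).re * x j = 2 * N * c k := by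
  have hx0 : ∑ j ∈ Idx N, x j = 2 * N * c 0 := by
    have h := hpair (Pi.single 0 1)
    rw [pairCP_single] at h
    norm_num at h
    have hq : ∀ j, Qr N (Pi.single (0 : Fin (n+1)) (1:ℝ)) j = 1 := by
      intro j
      rw [Qr_single, if_pos rfl, wR_eq]
      norm_num
    rw [Finset.sum_congr rfl fun j _ => by rw [hq j, mul_one]] at h
    rw [← h]; ring
  intro k
  by_cases hk : k = 0
  · subst hk
    simpa using hx0
  · have h := hpair (Pi.single k 1)
    rw [pairCP_single, if_neg hk] at h
    have hq : ∀ j, Qr N (Pi.single k (1:ℝ)) j = 2 * ((zeta N j) ^ (k.val:ℤ)).re := by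
      intro j
      rw [Qr_single, if_neg hk, wR_eq]; ring
    rw [Finset.sum_congr rfl fun j _ => by rw [hq j]] at h
    have h2 : ∑ j ∈ Idx N, x j * (2 * ((zeta N j) ^ (k.val:ℤ)).re)
        = 2 * ∑ j ∈ Idx N, ((zeta N j) ^ (k.val:ℤ)).re * x j := by
      rw [Finset.mul_sum]
      exact Finset.sum_congr rfl fun j _ => by ring
    rw [h2] at h
    nlinarith [h]



lemma Qr_cont {n N : ℕ} (j : ℤ) : Continuous fun q : Fin (n+1) → ℝ => Qr N q j := by
  unfold Qr
  fun_prop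

lemma pairCP_cont {n : ℕ} (c : Fin (n+1) → ℝ) : Continuous fun q : Fin (n+1) → ℝ => pairCP c q := by
  unfold pairCP
  fun_prop

lemma Qr_one {n N : ℕ} (j : ℤ) : Qr N (Pi.single (0:Fin (n+1)) (1:ℝ)) j = 1 := by
  rw [Qr_single, if_pos rfl, wR_eq]
  norm_num

/-- coercivity constant from the dual-cone hypothesis -/
lemma delta_exists {n N : ℕ} (c : Fin (n+1) → ℝ)
    (hc : ∀ p : Fin (n+1) → ℝ, p ≠ 0 → (∀ j ∈ Idx N, 0 ≤ Qr N p j) → 0 < pairCP c p) :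
    ∃ δ : ℝ, 0 < δ ∧ ∀ q : Fin (n+1) → ℝ,
      (∀ j ∈ Idx N, 0 ≤ Qr N q j) → δ * ‖q‖ ≤ pairCP c q := by
  classical
  set Sset : Set (Fin (n+1) → ℝ) :=
    {q | ‖q‖ = 1 ∧ ∀ j ∈ Idx N, 0 ≤ Qr N q j} with hSset
  have hclosed : IsClosed Sset := by
    have h1 : IsClosed {q : Fin (n+1) → ℝ | ‖q‖ = 1} :=
      isClosed_eq (continuous_norm) continuous_const
    have h2 : IsClosed {q : Fin (n+1) → ℝ | ∀ j ∈ Idx N, 0 ≤ Qr N q j} := by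
      have : {q : Fin (n+1) → ℝ | ∀ j ∈ Idx N, 0 ≤ Qr N q j}
          = ⋂ j ∈ (Idx N : Set ℤ), {q | 0 ≤ Qr N q j} := by
        ext q; simp
      rw [this]
      exact isClosed_biInter fun j _ => isClosed_le continuous_const (Qr_cont j)
    exact h1.inter h2
  have hbdd : Bornology.IsBounded Sset := by
    refine (Metric.isBounded_closedBall (x := (0 : Fin (n+1) → ℝ)) (r := 1)).subset ?_
    intro q hq
    simp only [Metric.mem_closedBall, dist_zero_right]
    exact le_of_eq hq.1
  have hcomp : IsCompact Sset := Metric.isCompact_of_isClosed_isBounded hclosed hbdd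
  by_cases hne : Sset.Nonempty
  · obtain ⟨q0, hq0S, hq0min⟩ := hcomp.exists_isMinOn hne ((pairCP_cont c).continuousOn)
    have hq0ne : q0 ≠ 0 := by
      intro h
      rw [h] at hq0S
      simp [hSset] at hq0S
    have hδ : 0 < pairCP c q0 := hc q0 hq0ne hq0S.2
    refine ⟨pairCP c q0, hδ, fun q hq => ?_⟩
    by_cases hq0' : q = 0
    · subst hq0'
      simp [pairCP]
    · have hnorm : 0 < ‖q‖ := norm_pos_iff.2 hq0'
      set u : Fin (n+1) → ℝ := ‖q‖⁻¹ • q with hu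
      have hun : ‖u‖ = 1 := by
        rw [hu, norm_smul, norm_inv, norm_norm, inv_mul_cancel₀ hnorm.ne']
      have huS : u ∈ Sset := by
        refine ⟨hun, fun j hj => ?_⟩
        rw [hu, Qr_smul]
        exact mul_nonneg (inv_nonneg.2 hnorm.le) (hq j hj)
      have hmin := hq0min huS
      have hqu : q = ‖q‖ • u := by
        rw [hu, smul_smul, mul_inv_cancel₀ hnorm.ne', one_smul]
      have hval : pairCP c q = ‖q‖ * pairCP c u := by
        conv_lhs => rw [hqu]
        rw [pairCP_smul]
      have hmin' : pairCP c q0 ≤ pairCP c u := hmin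
      nlinarith [hnorm.le]
  · refine ⟨1, one_pos, fun q hq => ?_⟩
    by_cases hq0' : q = 0
    · subst hq0'; simp [pairCP]
    · exfalso
      have hnorm : 0 < ‖q‖ := norm_pos_iff.2 hq0'
      refine hne ⟨‖q‖⁻¹ • q, ?_, fun j hj => ?_⟩
      · rw [norm_smul, norm_inv, norm_norm, inv_mul_cancel₀ hnorm.ne']
      · rw [Qr_smul]
        exact mul_nonneg (inv_nonneg.2 hnorm.le) (hq j hj)




set_option maxHeartbeats 4000000 in
lemma exists_crit {n N : ℕ} (hn : 1 ≤ n) (hNn : n < N) (c P : Fin (n+1) → ℝ)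
    (hc : ∀ p : Fin (n+1) → ℝ, p ≠ 0 → (∀ j ∈ Idx N, 0 ≤ Qr N p j) → 0 < pairCP c p)
    (hP : ∀ j ∈ Idx N, 0 < Qr N P j) :
    ∃ Q : Fin (n+1) → ℝ, (∀ j ∈ Idx N, 0 < Qr N Q j) ∧
      ∀ v : Fin (n+1) → ℝ,
        2 * N * pairCP c v = ∑ j ∈ Idx N, Qr N P j * (Qr N v j / Qr N Q j) := by
  classical
  have hN : 0 < N := by omega
  have hNR : (0:ℝ) < N := by exact_mod_cast hN
  have hIdx : ((N:ℤ)) ∈ Idx N := by simp [Idx]; omega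
  obtain ⟨δ, hδ, hδle⟩ := delta_exists c hc
  set J : (Fin (n+1) → ℝ) → ℝ := fun q =>
    2 * N * pairCP c q - ∑ j ∈ Idx N, Qr N P j * Real.log (Qr N q j) with hJ
  set Cq : ℝ := 2*(n+1)+1 with hCq
  have hCqpos : 0 < Cq := by positivity
  have hQle : ∀ (q : Fin (n+1) → ℝ) (j : ℤ), Qr N q j ≤ Cq * ‖q‖ :=
    fun q j => (le_abs_self _).trans (Qr_bound N q j)
  set Ks : ℝ := ∑ j ∈ Idx N, Qr N P j with hKs
  have hKspos : 0 < Ks := Finset.sum_pos (fun j hj => hP j hj) ⟨N, hIdx⟩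
  set e0 : Fin (n+1) → ℝ := Pi.single 0 1 with he0
  have he0Q : ∀ j, Qr N e0 j = 1 := fun j => Qr_one j
  set α : ℝ := J e0 with hα
  set ε' : ℝ := N * δ / Ks with hε'
  have hε'pos : 0 < ε' := div_pos (mul_pos hNR hδ) hKspos
  set C3 : ℝ := Ks * (Real.log (Cq / ε') - 1) with hC3
  set M : ℝ := max 1 ((α + C3) / (N * δ)) with hM
  have hM1 : (1:ℝ) ≤ M := le_max_left _ _
  have hMpos : (0:ℝ) < M := lt_of_lt_of_le one_pos hM1
  -- norm bound on the sublevel set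
  have hnormbound : ∀ q : Fin (n+1) → ℝ, (∀ j ∈ Idx N, 0 < Qr N q j) → J q ≤ α → ‖q‖ ≤ M := by
    intro q hqpos hqle
    have hqne : q ≠ 0 := by
      intro h
      have h2 := hqpos N hIdx
      rw [h, Qr_zero] at h2
      exact lt_irrefl _ h2
    have hnq : 0 < ‖q‖ := norm_pos_iff.2 hqne
    have hsum : ∑ j ∈ Idx N, Qr N P j * Real.log (Qr N q j) ≤ Ks * Real.log (Cq * ‖q‖) := by
      rw [hKs, Finset.sum_mul]
      refine Finset.sum_le_sum fun j hj => ?_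
      exact mul_le_mul_of_nonneg_left (Real.log_le_log (hqpos j hj) (hQle q j)) (hP j hj).le
    have hlog2 : Real.log (Cq * ‖q‖) ≤ ε' * ‖q‖ - 1 + Real.log (Cq / ε') := by
      have h1 : Cq * ‖q‖ = (ε' * ‖q‖) * (Cq / ε') := by field_simp
      rw [h1, Real.log_mul (by positivity) (by positivity)]
      have h2 := Real.log_le_sub_one_of_pos (show (0:ℝ) < ε' * ‖q‖ by positivity)
      linarith
    have hpair : δ * ‖q‖ ≤ pairCP c q := hδle q (fun j hj => (hqpos j hj).le)
    have hJlow : N * δ * ‖q‖ - C3 ≤ J q := by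
      have h2 : Ks * Real.log (Cq * ‖q‖) ≤ Ks * (ε' * ‖q‖ - 1 + Real.log (Cq / ε')) :=
        mul_le_mul_of_nonneg_left hlog2 hKspos.le
      have h3 : Ks * ε' = N * δ := by rw [hε']; field_simp
      have h4 : 2*(N:ℝ)*(δ*‖q‖) ≤ 2*N*pairCP c q := by nlinarith
      have h5 : J q = 2*N*pairCP c q - ∑ j ∈ Idx N, Qr N P j * Real.log (Qr N q j) := by
        rw [hJ]
      rw [h5, hC3]
      nlinarith [hsum]
    have h6 : N * δ * ‖q‖ ≤ α + C3 := by linarith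
    have h7 : ‖q‖ ≤ (α + C3) / (N * δ) := by
      rw [le_div_iff₀ (by positivity)]; linarith
    exact h7.trans (le_max_right _ _)
  -- lower bound for Qr on the sublevel set
  obtain ⟨jm, hjm, hjmmin⟩ := Finset.exists_min_image (Idx N) (fun j => Qr N P j) ⟨N, hIdx⟩
  set Pm : ℝ := Qr N P jm with hPm
  have hPmpos : 0 < Pm := hP jm hjm
  set L : ℝ := max 0 (Real.log (Cq * M)) with hL
  have hLnn : (0:ℝ) ≤ L := le_max_left _ _
  set B : ℝ := α + Ks * L with hB
  set γ : ℝ := max B 0 / Pm with hγ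
  set ε0 : ℝ := min (Real.exp (-γ)) 1 with hε0
  have hε0pos : 0 < ε0 := lt_min (Real.exp_pos _) one_pos
  have hε0le1 : ε0 ≤ 1 := min_le_right _ _
  have hQlow : ∀ q : Fin (n+1) → ℝ, (∀ j ∈ Idx N, 0 < Qr N q j) → J q ≤ α →
      ∀ j ∈ Idx N, ε0 ≤ Qr N q j := by
    intro q hqpos hqle j hj
    have hqM : ‖q‖ ≤ M := hnormbound q hqpos hqle
    have hqnn : (0:ℝ) ≤ ‖q‖ := norm_nonneg q
    have hpair : 0 ≤ pairCP c q :=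
      le_trans (by positivity) (hδle q fun j' hj' => (hqpos j' hj').le)
    have hSlow : -α ≤ ∑ j' ∈ Idx N, Qr N P j' * Real.log (Qr N q j') := by
      have h5 : J q = 2*N*pairCP c q - ∑ j' ∈ Idx N, Qr N P j' * Real.log (Qr N q j') := by
        rw [hJ]
      rw [h5] at hqle
      nlinarith
    have hup : ∀ j' ∈ Idx N, Qr N P j' * Real.log (Qr N q j') ≤ Qr N P j' * L := by
      intro j' hj'
      have hQM : Qr N q j' ≤ Cq * M := by
        refine (hQle q j').trans ?_
        nlinarith
      have h1 : Real.log (Qr N q j') ≤ L :=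
        le_trans (Real.log_le_log (hqpos j' hj') hQM) (le_max_right _ _)
      exact mul_le_mul_of_nonneg_left h1 (hP j' hj').le
    have hsplit : Qr N P j * Real.log (Qr N q j)
        = (∑ j' ∈ Idx N, Qr N P j' * Real.log (Qr N q j'))
          - ∑ j' ∈ (Idx N).erase j, Qr N P j' * Real.log (Qr N q j') := by
      rw [← Finset.sum_erase_add (Idx N) _ hj]; ring
    have herase : ∑ j' ∈ (Idx N).erase j, Qr N P j' * Real.log (Qr N q j') ≤ Ks * L := by
      calc ∑ j' ∈ (Idx N).erase j, Qr N P j' * Real.log (Qr N q j')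
          ≤ ∑ j' ∈ (Idx N).erase j, Qr N P j' * L :=
            Finset.sum_le_sum fun j' hj' => hup j' (Finset.mem_of_mem_erase hj')
        _ ≤ ∑ j' ∈ Idx N, Qr N P j' * L :=
            Finset.sum_le_sum_of_subset_of_nonneg (Finset.erase_subset _ _)
              (fun j' hj' _ => mul_nonneg (hP j' hj').le hLnn)
        _ = Ks * L := by rw [hKs, Finset.sum_mul]
    have hterm : -B ≤ Qr N P j * Real.log (Qr N q j) := by
      rw [hsplit, hB]; linarith
    have hloglow : -γ ≤ Real.log (Qr N q j) := by
      have hγnn : 0 ≤ γ := by positivity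
      by_cases hsign : 0 ≤ Real.log (Qr N q j)
      · linarith
      · push_neg at hsign
        have hPj : Pm ≤ Qr N P j := hjmmin j hj
        have h5 : Qr N P j * Real.log (Qr N q j) ≤ Pm * Real.log (Qr N q j) := by nlinarith
        have h6 : -B ≤ Pm * Real.log (Qr N q j) := le_trans hterm h5
        rw [hγ, neg_le, le_div_iff₀ hPmpos]
        nlinarith [le_max_left B 0]
    have h8 : Real.exp (-γ) ≤ Qr N q j := by
      calc Real.exp (-γ) ≤ Real.exp (Real.log (Qr N q j)) := Real.exp_le_exp.2 hloglow
        _ = Qr N q j := Real.exp_log (hqpos j hj)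
    exact le_trans (min_le_left _ _) h8
  -- the compact set T and minimization
  set T : Set (Fin (n+1) → ℝ) := {q | ‖q‖ ≤ M ∧ ∀ j ∈ Idx N, ε0 ≤ Qr N q j} with hT
  have hTclosed : IsClosed T := by
    have h1 : IsClosed {q : Fin (n+1) → ℝ | ‖q‖ ≤ M} :=
      isClosed_le continuous_norm continuous_const
    have h2 : IsClosed {q : Fin (n+1) → ℝ | ∀ j ∈ Idx N, ε0 ≤ Qr N q j} := by
      have heq : {q : Fin (n+1) → ℝ | ∀ j ∈ Idx N, ε0 ≤ Qr N q j}
          = ⋂ j ∈ ((Idx N : Finset ℤ) : Set ℤ), {q | ε0 ≤ Qr N q j} := by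
        ext q; simp
      rw [heq]
      exact isClosed_biInter fun j _ => isClosed_le continuous_const (Qr_cont j)
    exact h1.inter h2
  have hTbdd : Bornology.IsBounded T := by
    refine (Metric.isBounded_closedBall (x := (0 : Fin (n+1) → ℝ)) (r := M)).subset ?_
    intro q hq
    simp only [Metric.mem_closedBall, dist_zero_right]
    exact hq.1
  have hTcomp : IsCompact T := Metric.isCompact_of_isClosed_isBounded hTclosed hTbdd
  have he0T : e0 ∈ T := by
    constructor
    · have h1 : ‖e0‖ ≤ 1 := by
        rw [pi_norm_le_iff_of_nonneg zero_le_one]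
        intro k
        rw [he0, Real.norm_eq_abs, Pi.single_apply]
        split_ifs <;> norm_num
      linarith
    · intro j hj; rw [he0Q]; exact hε0le1
  have hJcont : ContinuousOn J T := by
    rw [hJ]
    apply ContinuousOn.sub
    · exact (continuous_const.mul (pairCP_cont c)).continuousOn
    · refine continuousOn_finset_sum (Idx N) fun j hj => ?_
      refine ContinuousOn.mul continuousOn_const ?_
      intro q hq
      refine ContinuousAt.continuousWithinAt ?_
      have hne' : Qr N q j ≠ 0 := ne_of_gt (lt_of_lt_of_le hε0pos (hq.2 j hj))
      exact ContinuousAt.comp (x := q) (Real.continuousAt_log hne') ((Qr_cont j).continuousAt)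
  obtain ⟨qh, hqhT, hqhmin⟩ := hTcomp.exists_isMinOn ⟨e0, he0T⟩ hJcont
  have hqhpos : ∀ j ∈ Idx N, 0 < Qr N qh j := fun j hj => lt_of_lt_of_le hε0pos (hqhT.2 j hj)
  have hqhα : J qh ≤ α := hqhmin he0T
  have hglob : ∀ q : Fin (n+1) → ℝ, (∀ j ∈ Idx N, 0 < Qr N q j) → J qh ≤ J q := by
    intro q hqpos
    by_contra hlt
    push_neg at hlt
    have hqα : J q ≤ α := le_trans hlt.le hqhα
    have hqT : q ∈ T := ⟨hnormbound q hqpos hqα, hQlow q hqpos hqα⟩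
    exact absurd (hqhmin hqT) (not_le.2 hlt)
  refine ⟨qh, hqhpos, fun v => ?_⟩
  set U : Set (Fin (n+1) → ℝ) := {q | ∀ j ∈ Idx N, 0 < Qr N q j} with hU
  have hUopen : IsOpen U := by
    have heq : U = ⋂ j ∈ ((Idx N : Finset ℤ) : Set ℤ), {q : Fin (n+1) → ℝ | 0 < Qr N q j} := by
      ext q; simp [hU]
    rw [heq]
    exact Set.Finite.isOpen_biInter (Idx N).finite_toSet
      (fun j _ => isOpen_lt continuous_const (Qr_cont j))
  set g : ℝ → ℝ := fun t => J (qh + t • v) with hg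
  have hg0 : g 0 = J qh := by simp [hg]
  have hgmin : IsLocalMin g 0 := by
    have hcont : Continuous fun t : ℝ => qh + t • v := by fun_prop
    have hmem0 : qh + (0:ℝ) • v ∈ U := by
      simpa [hU] using hqhpos
    have hmem : ∀ᶠ t in nhds (0:ℝ), (qh + t • v) ∈ U :=
      hcont.continuousAt.eventually_mem (hUopen.mem_nhds hmem0)
    refine hmem.mono fun t ht => ?_
    rw [hg0]
    exact hglob _ ht
  set D : ℝ := 2*N*pairCP c v - ∑ j ∈ Idx N, Qr N P j * (Qr N v j / Qr N qh j) with hD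
  have hgderiv : HasDerivAt g D 0 := by
    have hgeq : g = fun t => (2*N*pairCP c qh + t * (2*N*pairCP c v))
        - ∑ j ∈ Idx N, Qr N P j * Real.log (Qr N qh j + t * Qr N v j) := by
      funext t
      rw [hg]
      simp only [hJ]
      congr 1
      · rw [pairCP_add, pairCP_smul]; ring
      · refine Finset.sum_congr rfl fun j _ => ?_
        rw [Qr_add, Qr_smul]
    rw [hgeq, hD]
    have h1 : HasDerivAt (fun t : ℝ => 2*N*pairCP c qh + t * (2*N*pairCP c v))
        (2*N*pairCP c v) 0 := (hasDerivAt_mul_const _).const_add _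
    have h2 : HasDerivAt
        (fun t : ℝ => ∑ j ∈ Idx N, Qr N P j * Real.log (Qr N qh j + t * Qr N v j))
        (∑ j ∈ Idx N, Qr N P j * (Qr N v j / Qr N qh j)) 0 := by
      apply HasDerivAt.fun_sum
      intro j hj
      have hlin : HasDerivAt (fun t : ℝ => Qr N qh j + t * Qr N v j) (Qr N v j) 0 :=
        (hasDerivAt_mul_const _).const_add _
      have hne : Qr N qh j + (0:ℝ) * Qr N v j ≠ 0 := by
        simpa using (hqhpos j hj).ne'
      have h3 := (hlin.log hne).const_mul (Qr N P j)
      simpa using h3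
    exact h1.sub h2
  have hD0 : D = 0 := hgmin.hasDerivAt_eq_zero hgderiv
  rw [hD] at hD0
  linarith



lemma Qr_sub {n : ℕ} (N : ℕ) (p q : Fin (n+1) → ℝ) (j : ℤ) :
    Qr N (p - q) j = Qr N p j - Qr N q j := by
  simp [Qr, sub_mul, Finset.sum_sub_distrib]
  ring

lemma Qr_negIdx {n : ℕ} (N : ℕ) (p : Fin (n+1) → ℝ) (j : ℤ) :
    Qr N p (-j) = Qr N p j := by
  rw [← Qr_spec, ← Qr_spec, ppC_neg]

lemma Qr_periodic {n : ℕ} (N : ℕ) (hN : 0 < N) (p : Fin (n+1) → ℝ) (j : ℤ) :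
    Qr N p (j + 2 * N) = Qr N p j := by
  rw [← Qr_spec, ← Qr_spec, ppC_periodic N hN]

lemma unique_crit {n N : ℕ} (hNn : n < N) (P Q1 Q2 : Fin (n+1) → ℝ)
    (hP : ∀ j ∈ Idx N, 0 < Qr N P j)
    (h1 : ∀ j ∈ Idx N, 0 < Qr N Q1 j) (h2 : ∀ j ∈ Idx N, 0 < Qr N Q2 j)
    (heq : ∀ v : Fin (n+1) → ℝ,
      ∑ j ∈ Idx N, (Qr N P j / Qr N Q1 j) * Qr N v j
        = ∑ j ∈ Idx N, (Qr N P j / Qr N Q2 j) * Qr N v j) :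
    Q1 = Q2 := by
  set v : Fin (n+1) → ℝ := Q1 - Q2 with hv
  have hvQr : ∀ j, Qr N v j = Qr N Q1 j - Qr N Q2 j := fun j => Qr_sub N Q1 Q2 j
  have hzero : ∑ j ∈ Idx N,
      (Qr N P j / Qr N Q1 j - Qr N P j / Qr N Q2 j) * Qr N v j = 0 := by
    simp only [sub_mul]
    rw [Finset.sum_sub_distrib, heq v, sub_self]
  have hterm : ∀ j ∈ Idx N,
      (Qr N P j / Qr N Q1 j - Qr N P j / Qr N Q2 j) * Qr N v j
      = -(Qr N P j * (Qr N Q1 j - Qr N Q2 j)^2 / (Qr N Q1 j * Qr N Q2 j)) := by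
    intro j hj
    have e1 := (h1 j hj).ne'
    have e2 := (h2 j hj).ne'
    rw [hvQr j]
    field_simp
    ring
  have hsum0 : ∑ j ∈ Idx N,
      Qr N P j * (Qr N Q1 j - Qr N Q2 j)^2 / (Qr N Q1 j * Qr N Q2 j) = 0 := by
    rw [Finset.sum_congr rfl hterm] at hzero
    rw [Finset.sum_neg_distrib, neg_eq_zero] at hzero
    exact hzero
  have hnn : ∀ j ∈ Idx N,
      0 ≤ Qr N P j * (Qr N Q1 j - Qr N Q2 j)^2 / (Qr N Q1 j * Qr N Q2 j) := by
    intro j hj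
    exact div_nonneg (mul_nonneg (hP j hj).le (sq_nonneg _)) (mul_pos (h1 j hj) (h2 j hj)).le
  have heach := (Finset.sum_eq_zero_iff_of_nonneg hnn).1 hsum0
  have hQeq : ∀ j ∈ Idx N, Qr N v j = 0 := by
    intro j hj
    have h := heach j hj
    rw [div_eq_zero_iff] at h
    rcases h with h | h
    · rcases mul_eq_zero.1 h with h' | h'
      · exact absurd h' (hP j hj).ne'
      · rw [hvQr j]
        exact pow_eq_zero_iff (n := 2) (by norm_num) |>.1 h'
    · exact absurd h (mul_pos (h1 j hj) (h2 j hj)).ne'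
  have := Qr_inj N hNn v hQeq
  rw [hv] at this
  exact sub_eq_zero.1 this

theorem stmt0_aux (N n : ℕ) (hn : 1 ≤ n) (hNn : n < N)
    (c P : Fin (n + 1) → ℝ) (hc : memCplus N c) (hP : memPplus N P) :
    ∃! Q : Fin (n + 1) → ℝ, memPplus N Q ∧
      ∀ k : Fin (n + 1),
        (∑ j ∈ Idx N, zeta N j ^ (k.val : ℤ) *
            (((ppC P (zeta N j)).re / (ppC Q (zeta N j)).re : ℝ) : ℂ)) / (2 * N)
          = (c k : ℂ) := by
  classical
  have hN : 0 < N := by omega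
  have hNC : (2 * (N:ℂ)) ≠ 0 := by
    have : (N:ℂ) ≠ 0 := by exact_mod_cast hN.ne'
    simp [this]
  have hP' : ∀ j ∈ Idx N, 0 < Qr N P j := fun j hj => by
    rw [← Qr_spec]; exact hP j hj
  have hc' : ∀ p : Fin (n+1) → ℝ, p ≠ 0 → (∀ j ∈ Idx N, 0 ≤ Qr N p j) → 0 < pairCP c p := by
    intro p hp h
    exact hc p hp (fun j hj => by rw [Qr_spec]; exact h j hj)
  -- the translation between the complex moment conditions and the real pairing identity
  have key : ∀ Q : Fin (n+1) → ℝ, (∀ j ∈ Idx N, 0 < Qr N Q j) →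
      ((∀ k : Fin (n + 1),
        (∑ j ∈ Idx N, zeta N j ^ (k.val : ℤ) *
            (((ppC P (zeta N j)).re / (ppC Q (zeta N j)).re : ℝ) : ℂ)) / (2 * N)
          = (c k : ℂ))
      ↔ (∀ v : Fin (n+1) → ℝ, 2 * N * pairCP c v
          = ∑ j ∈ Idx N, (Qr N P j / Qr N Q j) * Qr N v j)) := by
    intro Q hQ
    set x : ℤ → ℝ := fun j => Qr N P j / Qr N Q j with hx
    have hsym : ∀ j, x (-j) = x j := by
      intro j; rw [hx]; simp only [Qr_negIdx]
    have hper : ∀ j, x (j + 2 * N) = x j := by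
      intro j; rw [hx]; simp only [Qr_periodic N hN]
    have hsummand : ∀ k : Fin (n+1), ∀ j ∈ Idx N,
        zeta N j ^ (k.val : ℤ) *
            (((ppC P (zeta N j)).re / (ppC Q (zeta N j)).re : ℝ) : ℂ)
        = zeta N j ^ (k.val : ℤ) * ((x j : ℝ) : ℂ) := by
      intro k j hj
      rw [hx]
      simp only [Qr_spec]
    constructor
    · intro hmomC v
      have hmomR : ∀ k : Fin (n+1),
          ∑ j ∈ Idx N, ((zeta N j) ^ (k.val : ℤ)).re * x j = 2 * N * c k := by
        intro k
        have h1 := hmomC k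
        rw [div_eq_iff hNC, Finset.sum_congr rfl (hsummand k),
          sum_real N hN (k.val : ℤ) x hsym hper] at h1
        have h2 : ((∑ j ∈ Idx N, ((zeta N j) ^ (k.val:ℤ)).re * x j : ℝ) : ℂ)
            = ((2 * N * c k : ℝ) : ℂ) := by
          rw [h1]; push_cast; ring
        exact_mod_cast h2
      exact (pair_of_moments N c x hmomR v).symm
    · intro hpair k
      have hmomR := moments_of_pair N c x (fun v => by rw [hpair v]) k
      rw [Finset.sum_congr rfl (hsummand k), sum_real N hN (k.val : ℤ) x hsym hper, hmomR]
      rw [div_eq_iff hNC]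
      push_cast
      ring
  obtain ⟨Q, hQpos, hcrit⟩ := exists_crit hn hNn c P hc' hP'
  have hcrit' : ∀ v : Fin (n+1) → ℝ, 2 * N * pairCP c v
      = ∑ j ∈ Idx N, (Qr N P j / Qr N Q j) * Qr N v j := by
    intro v
    rw [hcrit v]
    exact Finset.sum_congr rfl fun j _ => by ring
  refine ⟨Q, ⟨fun j hj => by rw [Qr_spec]; exact hQpos j hj, (key Q hQpos).2 hcrit'⟩, ?_⟩
  rintro Q' ⟨hQ'mem, hQ'mom⟩
  have hQ'pos : ∀ j ∈ Idx N, 0 < Qr N Q' j := fun j hj => by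
    rw [← Qr_spec]; exact hQ'mem j hj
  have hpair' := (key Q' hQ'pos).1 hQ'mom
  refine unique_crit hNn P Q' Q hP' hQ'pos hQpos fun v => ?_
  rw [← hpair' v, ← hcrit' v]

end S0

/-- existence and uniqueness of `Q ∈ 𝔓₊(N)` such that `Φ = P/Q`
matches the covariance data `c_0, …, c_n`. -/
theorem stmt0 (N n : ℕ) (hn : 1 ≤ n) (hNn : n < N)
    (c P : Fin (n + 1) → ℝ) (hc : memCplus N c) (hP : memPplus N P) :
    ∃! Q : Fin (n + 1) → ℝ, memPplus N Q ∧
      ∀ k : Fin (n + 1),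
        (∑ j ∈ Idx N, zeta N j ^ (k.val : ℤ) *
            (((ppC P (zeta N j)).re / (ppC Q (zeta N j)).re : ℝ) : ℂ)) / (2 * N)
          = (c k : ℂ) := by
  exact S0.stmt0_aux N n hn hNn c P hc hP

end
end

section
/- Suppose c = (c_0, …, c_n) ∈ 𝔠₊(N) and P ∈ 𝔓₊(N). Identify each Q ∈ 𝔓₊(N) with its coefficient vector q = (q_0, …, q_n) ∈ ℝ^{n+1}. Then the dual functional 𝕁_P(Q) := c_0 q_0 + 2 Σ_{k=1}^n c_k q_k − (1/2N) Σ_{j=−N+1}^N P(ζ_j) log Q(ζ_j) is strictly convex on the open convex cone 𝔓₊(N) and attains a unique minimum at some Q̂ ∈ 𝔓₊(N); moreover the minimizer Q̂ satisfies the moment conditions (1/2N) Σ_{j=−N+1}^N ζ_j^k P(ζ_j)/Q̂(ζ_j) = c_k for k = 0, 1, …, n. -/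
open Finset Complex Matrix

noncomputable section

/-- The dual functional
`𝕁_P(Q) = c_0 q_0 + 2 Σ_{k=1}^n c_k q_k − (1/2N) Σ_j P(ζ_j) log Q(ζ_j)`. -/
def Jdual (N : ℕ) {n : ℕ} (c P q : Fin (n + 1) → ℝ) : ℝ :=
  pairCP c q -
    (∑ j ∈ Idx N, (ppC P (zeta N j)).re * Real.log ((ppC q (zeta N j)).re)) / (2 * N)

/-- The moment conditions `(1/2N) Σ_j ζ_j^k P(ζ_j)/Q(ζ_j) = c_k`, `k = 0, …, n`. -/
def momentConds (N : ℕ) {n : ℕ} (P Q c : Fin (n + 1) → ℝ) : Prop :=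
  ∀ k : Fin (n + 1),
    (∑ j ∈ Idx N, zeta N j ^ (k.val : ℤ) *
        (((ppC P (zeta N j)).re / (ppC Q (zeta N j)).re : ℝ) : ℂ)) / (2 * N) = (c k : ℂ)

def bb (N : ℕ) {n : ℕ} (j : ℤ) (k : Fin (n+1)) : ℝ :=
  2 * Real.cos (Real.pi * j * k / N) - (if k = 0 then 1 else 0)
def Vv (N : ℕ) {n : ℕ} (q : Fin (n + 1) → ℝ) (j : ℤ) : ℝ :=
  ∑ k : Fin (n+1), q k * bb N j k

lemma zeta_zpow (N : ℕ) (j m : ℤ) :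
    zeta N j ^ m = Complex.exp (Real.pi * Complex.I * (j * m) / N) := by
  rw [zeta, ← Complex.exp_int_mul]; ring_nf

lemma exp_add_exp_neg (θ : ℝ) :
    Complex.exp ((θ:ℂ) * Complex.I) + Complex.exp (-((θ:ℂ) * Complex.I)) =
      ((2 * Real.cos θ : ℝ) : ℂ) := by
  have h1 : Complex.exp ((θ:ℂ) * Complex.I) = Complex.cos θ + Complex.sin θ * Complex.I :=
    Complex.exp_mul_I _
  have h2 : Complex.exp ((-θ:ℂ) * Complex.I) = Complex.cos (-θ) + Complex.sin (-θ) * Complex.I :=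
    Complex.exp_mul_I _
  rw [h1, show -((θ:ℂ)*Complex.I) = (-θ:ℂ)*Complex.I by ring, h2]
  push_cast
  rw [Complex.cos_neg, Complex.sin_neg]
  ring

lemma zeta_pow_add_neg (N : ℕ) (j m : ℤ) :
    zeta N j ^ m + zeta N j ^ (-m) =
      ((2 * Real.cos (Real.pi * j * m / N) : ℝ) : ℂ) := by
  rw [zeta_zpow, zeta_zpow, ← exp_add_exp_neg (Real.pi * j * m / N)]
  have e1 : Real.pi * Complex.I * (j * m) / N = ((Real.pi * j * m / N : ℝ) : ℂ) * Complex.I := by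
    push_cast; ring
  have e2 : Real.pi * Complex.I * (j * (-m)) / N =
      -(((Real.pi * j * m / N : ℝ) : ℂ) * Complex.I) := by
    push_cast; ring
  rw [e1]
  congr 1
  rw [← e2]
  push_cast
  ring_nf

lemma ppC_eq (N : ℕ) {n : ℕ} (q : Fin (n+1) → ℝ) (j : ℤ) :
    ppC q (zeta N j) = ((Vv N q j : ℝ) : ℂ) := by
  rw [ppC, Vv]
  have : ∀ k : Fin (n+1), (q k : ℂ) * (zeta N j ^ (k.val : ℤ) + zeta N j ^ (-(k.val : ℤ)))
      = ((q k * (2 * Real.cos (Real.pi * j * k / N)) : ℝ) : ℂ) := by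
    intro k
    rw [zeta_pow_add_neg N j (k.val : ℤ)]
    push_cast; ring
  rw [Finset.sum_congr rfl (fun k _ => this k)]
  rw [← Complex.ofReal_sum]
  norm_cast
  simp only [bb, mul_sub, Finset.sum_sub_distrib, mul_ite, mul_one, mul_zero,
    Finset.sum_ite_eq', Finset.mem_univ, if_true]

lemma ppC_re (N : ℕ) {n : ℕ} (q : Fin (n+1) → ℝ) (j : ℤ) :
    (ppC q (zeta N j)).re = Vv N q j := by
  rw [ppC_eq]; exact Complex.ofReal_re _



lemma sum_Icc_eq_range (a : ℤ) (m : ℕ) (f : ℤ → ℂ) :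
    ∑ j ∈ Finset.Icc a (a + m - 1), f j = ∑ i ∈ Finset.range m, f (a + i) := by
  apply Finset.sum_nbij' (i := fun j => (j - a).toNat) (j := fun i => a + (i:ℤ))
  · intro x hx; simp only [Finset.mem_Icc] at hx; simp only [Finset.mem_range]; omega
  · intro x hx; simp only [Finset.mem_range] at hx; simp only [Finset.mem_Icc]; omega
  · intro x hx; simp only [Finset.mem_Icc] at hx; omega
  · intro x hx; simp only [Finset.mem_range] at hx; omega
  · intro x hx; simp only [Finset.mem_Icc] at hx
    congr 1; omega

lemma zeta_ne_one (N : ℕ) (hN : 0 < N) (d : ℤ) (hd : d ≠ 0) (hd2 : |d| < 2 * N) :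
    zeta N d ≠ 1 := by
  rw [zeta]
  intro h
  rw [Complex.exp_eq_one_iff] at h
  obtain ⟨m, hm⟩ := h
  have hNne : (N:ℂ) ≠ 0 := by exact_mod_cast hN.ne'
  have hπ : (Real.pi : ℂ) ≠ 0 := by exact_mod_cast Real.pi_ne_zero
  have hI : Complex.I ≠ 0 := Complex.I_ne_zero
  have : (d : ℂ) = 2 * N * m := by
    field_simp at hm
    have h2 : ((d:ℂ) - 2 * N * m) * ((Real.pi:ℂ) * Complex.I) = 0 := by linear_combination ((Real.pi:ℂ) * Complex.I) * hm
    rcases mul_eq_zero.1 h2 with h3 | h3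
    · linear_combination h3
    · exact absurd h3 (mul_ne_zero hπ hI)
  have hdm : d = 2 * N * m := by exact_mod_cast this
  rcases eq_or_ne m 0 with rfl | hm0
  · simp at hdm; omega
  · have : 1 ≤ |m| := Int.one_le_abs hm0
    have h4 : (2*(N:ℤ)) * 1 ≤ (2*N) * |m| :=
      mul_le_mul_of_nonneg_left this (by positivity)
    have : (2*N : ℤ) ≤ |d| := by
      rw [hdm, abs_mul]
      have : |(2*(N:ℤ))| = 2*N := abs_of_nonneg (by positivity)
      rw [this]; omega
    omega

lemma zeta_pow_two_N (N : ℕ) (hN : 0 < N) (d : ℤ) :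
    zeta N d ^ (2 * N : ℕ) = 1 := by
  have : zeta N d ^ ((2 * N : ℕ) : ℤ) = Complex.exp (d * (2 * Real.pi * Complex.I)) := by
    rw [zeta_zpow]
    congr 1
    have hNne : (N:ℂ) ≠ 0 := by exact_mod_cast hN.ne'
    field_simp
    push_cast
    ring
  rw [← zpow_natCast, this, Complex.exp_int_mul_two_pi_mul_I]

lemma orth (N : ℕ) (hN : 0 < N) (d : ℤ) (hd2 : |d| < 2 * N) :
    ∑ j ∈ Idx N, zeta N j ^ d = if d = 0 then (2 * N : ℂ) else 0 := by
  have hswap : ∀ j : ℤ, zeta N j ^ d = zeta N d ^ j := by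
    intro j; rw [zeta_zpow, zeta_zpow, mul_comm (j:ℂ)]
  simp only [hswap]
  rcases eq_or_ne d 0 with rfl | hd
  · simp only [if_pos rfl, zeta]
    simp only [Int.cast_zero, mul_zero, zero_div, Complex.exp_zero, _root_.one_zpow]
    rw [Finset.sum_const, Idx, Int.card_Icc]
    simp only [nsmul_eq_mul, mul_one]
    have : (-(N:ℤ) + 1 - (N:ℤ)).toNat = 0 := by omega
    have h2 : ((N:ℤ) + 1 - (-(N:ℤ) + 1)).toNat = 2 * N := by omega
    rw [h2]; push_cast; ring
  · rw [if_neg hd]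
    have hIdx : Idx N = Finset.Icc (-(N:ℤ) + 1) ((-(N:ℤ)+1) + (2*N : ℕ) - 1) := by
      rw [Idx]; congr 1; push_cast; ring
    rw [hIdx, sum_Icc_eq_range]
    have hne := zeta_ne_one N hN d hd hd2
    calc ∑ i ∈ Finset.range (2*N), zeta N d ^ ((-(N:ℤ)+1) + (i:ℤ))
        = zeta N d ^ (-(N:ℤ)+1) * ∑ i ∈ Finset.range (2*N), zeta N d ^ (i:ℕ) := by
          rw [Finset.mul_sum]
          refine Finset.sum_congr rfl (fun i _ => ?_)
          rw [zpow_add₀ (by rw [zeta]; exact Complex.exp_ne_zero _)]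
          rw [zpow_natCast]
      _ = 0 := by
          rw [geom_sum_eq hne, zeta_pow_two_N N hN]
          simp

lemma dft (N n : ℕ) (hNn : n < N) (q : Fin (n+1) → ℝ) (k : Fin (n+1)) :
    ∑ j ∈ Idx N, zeta N j ^ (k.val : ℤ) * ((Vv N q j : ℝ) : ℂ) = 2 * N * q k := by
  have hN : 0 < N := lt_of_le_of_lt (Nat.zero_le n) hNn
  have hz : ∀ j : ℤ, zeta N j ≠ 0 := fun j => by rw [zeta]; exact Complex.exp_ne_zero _
  have expand : ∀ j ∈ Idx N, zeta N j ^ (k.val : ℤ) * ((Vv N q j : ℝ) : ℂ) =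
      ∑ m : Fin (n+1), (q m : ℂ) *
        (zeta N j ^ ((k.val:ℤ) + (m.val:ℤ)) + zeta N j ^ ((k.val:ℤ) - (m.val:ℤ)))
        - (q 0 : ℂ) * zeta N j ^ (k.val : ℤ) := by
    intro j _
    rw [← ppC_eq, ppC, mul_sub, Finset.mul_sum, mul_comm (zeta N j ^ (k.val:ℤ)) ((q 0 : ℂ))]
    congr 1
    refine Finset.sum_congr rfl fun m _ => ?_
    rw [zpow_add₀ (hz j), zpow_sub₀ (hz j), _root_.zpow_neg]
    ring
  rw [Finset.sum_congr rfl expand, Finset.sum_sub_distrib]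
  have h1 : ∑ j ∈ Idx N, ∑ m : Fin (n+1), (q m : ℂ) *
      (zeta N j ^ ((k.val:ℤ) + (m.val:ℤ)) + zeta N j ^ ((k.val:ℤ) - (m.val:ℤ)))
      = ∑ m : Fin (n+1), (q m : ℂ) *
        ((∑ j ∈ Idx N, zeta N j ^ ((k.val:ℤ) + (m.val:ℤ))) +
          ∑ j ∈ Idx N, zeta N j ^ ((k.val:ℤ) - (m.val:ℤ))) := by
    rw [Finset.sum_comm]
    exact Finset.sum_congr rfl fun m _ => by
      rw [← Finset.sum_add_distrib, ← Finset.mul_sum]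
  rw [h1, ← Finset.mul_sum]
  have hk := k.isLt
  have horth : ∀ m : Fin (n+1),
      (∑ j ∈ Idx N, zeta N j ^ ((k.val:ℤ) + (m.val:ℤ)))
        = if (k.val:ℤ) + (m.val:ℤ) = 0 then (2*N:ℂ) else 0 := fun m =>
    orth N hN _ (by have := m.isLt; rw [_root_.abs_of_nonneg (by positivity)]; push_cast; omega)
  have horth2 : ∀ m : Fin (n+1),
      (∑ j ∈ Idx N, zeta N j ^ ((k.val:ℤ) - (m.val:ℤ)))
        = if (k.val:ℤ) - (m.val:ℤ) = 0 then (2*N:ℂ) else 0 := fun m =>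
    orth N hN _ (by have := m.isLt; rw [abs_sub_lt_iff]; constructor <;> push_cast <;> omega)
  have horth3 : (∑ j ∈ Idx N, zeta N j ^ ((k.val:ℤ)))
      = if (k.val:ℤ) = 0 then (2*N:ℂ) else 0 :=
    orth N hN _ (by rw [_root_.abs_of_nonneg (by positivity)]; push_cast; omega)
  simp only [horth, horth2, horth3]
  rcases eq_or_ne k 0 with rfl | hk0
  · have : ∀ m : Fin (n+1),
        ((if ((0:Fin (n+1)).val:ℤ) + (m.val:ℤ) = 0 then (2*N:ℂ) else 0) +
          if ((0:Fin (n+1)).val:ℤ) - (m.val:ℤ) = 0 then (2*N:ℂ) else 0)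
        = if m = 0 then (4*N:ℂ) else 0 := by
      intro m
      rcases eq_or_ne m 0 with rfl | hm0
      · simp; ring
      · have : m.val ≠ 0 := fun h => hm0 (Fin.ext h)
        rw [if_neg (by omega), if_neg (by omega), if_neg hm0]; ring
    simp only [this, mul_ite, mul_zero]
    rw [Finset.sum_ite_eq' Finset.univ (0 : Fin (n+1))]
    norm_num
    ring
  · have hkv : k.val ≠ 0 := fun h => hk0 (Fin.ext h)
    have : ∀ m : Fin (n+1),
        ((if (k.val:ℤ) + (m.val:ℤ) = 0 then (2*N:ℂ) else 0) +
          if (k.val:ℤ) - (m.val:ℤ) = 0 then (2*N:ℂ) else 0)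
        = if m = k then (2*N:ℂ) else 0 := by
      intro m
      rcases eq_or_ne m k with h | hmk
      · rw [h, if_neg (show ¬((k.val:ℤ) + (k.val:ℤ) = 0) by omega),
          if_pos (show (k.val:ℤ) - (k.val:ℤ) = 0 by omega), if_pos rfl]
        ring
      · have hvm : m.val ≠ k.val := fun h => hmk (Fin.ext h)
        rw [if_neg (by omega), if_neg (by omega), if_neg hmk]; ring
    simp only [this, mul_ite, mul_zero]
    rw [Finset.sum_ite_eq' Finset.univ k]
    simp only [Finset.mem_univ, if_true]
    rw [if_neg (show ¬((k.val:ℤ) = 0) by omega)]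
    ring

/-- Injectivity of `q ↦ Vv N q ·` on the grid. -/
lemma Vv_inj (N n : ℕ) (hNn : n < N) (q : Fin (n+1) → ℝ)
    (h : ∀ j ∈ Idx N, Vv N q j = 0) : q = 0 := by
  have hN : 0 < N := lt_of_le_of_lt (Nat.zero_le n) hNn
  funext k
  have := dft N n hNn q k
  rw [Finset.sum_congr rfl (fun j hj => by
    rw [h j hj, Complex.ofReal_zero, mul_zero]), Finset.sum_const_zero] at this
  have h2 : (2 * N : ℂ) ≠ 0 := by
    simp only [ne_eq, mul_eq_zero]
    push_neg
    exact ⟨two_ne_zero, Nat.cast_ne_zero.2 hN.ne'⟩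
  have h3 : (q k : ℂ) = 0 := by
    rcases mul_eq_zero.1 this.symm with h | h
    · exact absurd h h2
    · exact h
  have h4 : q k = 0 := by exact_mod_cast h3
  simp [h4]


/-! ### conversion and linearity lemmas -/

lemma memPplus_iff (N : ℕ) {n : ℕ} (p : Fin (n+1) → ℝ) :
    memPplus N p ↔ ∀ j ∈ Idx N, 0 < Vv N p j := by
  unfold memPplus; simp only [ppC_re]

lemma Jdual_eq (N : ℕ) {n : ℕ} (c P q : Fin (n+1) → ℝ) :
    Jdual N c P q =
      pairCP c q - (∑ j ∈ Idx N, Vv N P j * Real.log (Vv N q j)) / (2 * N) := by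
  unfold Jdual; simp only [ppC_re]

lemma Vv_add (N : ℕ) {n : ℕ} (q q' : Fin (n+1) → ℝ) (j : ℤ) :
    Vv N (q + q') j = Vv N q j + Vv N q' j := by
  unfold Vv; rw [← Finset.sum_add_distrib]
  exact Finset.sum_congr rfl fun k _ => by simp [add_mul]

lemma Vv_smul (N : ℕ) {n : ℕ} (a : ℝ) (q : Fin (n+1) → ℝ) (j : ℤ) :
    Vv N (a • q) j = a * Vv N q j := by
  unfold Vv; rw [Finset.mul_sum]
  exact Finset.sum_congr rfl fun k _ => by simp [mul_assoc]

lemma Vv_comb (N : ℕ) {n : ℕ} (a b : ℝ) (q q' : Fin (n+1) → ℝ) (j : ℤ) :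
    Vv N (a • q + b • q') j = a * Vv N q j + b * Vv N q' j := by
  rw [Vv_add, Vv_smul, Vv_smul]

lemma pairCP_add {n : ℕ} (c q q' : Fin (n+1) → ℝ) :
    pairCP c (q + q') = pairCP c q + pairCP c q' := by
  unfold pairCP
  rw [show ∑ k : Fin (n+1), c k * (q + q') k = ∑ k : Fin (n+1), c k * q k + ∑ k : Fin (n+1), c k * q' k by
    rw [← Finset.sum_add_distrib]; exact Finset.sum_congr rfl fun k _ => by simp [mul_add]]
  simp only [Pi.add_apply]; ring

lemma pairCP_smul {n : ℕ} (a : ℝ) (c q : Fin (n+1) → ℝ) :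
    pairCP c (a • q) = a * pairCP c q := by
  unfold pairCP
  rw [show ∑ k : Fin (n+1), c k * (a • q) k = a * ∑ k : Fin (n+1), c k * q k by
    rw [Finset.mul_sum]; exact Finset.sum_congr rfl fun k _ => by simp; ring]
  simp only [Pi.smul_apply, smul_eq_mul]; ring

lemma pairCP_comb {n : ℕ} (a b : ℝ) (c q q' : Fin (n+1) → ℝ) :
    pairCP c (a • q + b • q') = a * pairCP c q + b * pairCP c q' := by
  rw [pairCP_add, pairCP_smul, pairCP_smul]

lemma Vv_cont (N : ℕ) {n : ℕ} (j : ℤ) : Continuous (fun q : Fin (n+1) → ℝ => Vv N q j) := by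
  unfold Vv
  exact continuous_finset_sum _ fun k _ => (continuous_apply k).mul continuous_const

lemma pairCP_cont {n : ℕ} (c : Fin (n+1) → ℝ) : Continuous (fun q : Fin (n+1) → ℝ => pairCP c q) := by
  unfold pairCP
  exact (continuous_const.mul (continuous_finset_sum _ fun k _ =>
    continuous_const.mul (continuous_apply k))).sub
    (continuous_const.mul (continuous_apply 0))

lemma comb_pos {a b x y : ℝ} (ha : 0 ≤ a) (hb : 0 ≤ b) (hab : a + b = 1)
    (hx : 0 < x) (hy : 0 < y) : 0 < a * x + b * y := by
  have h5 : min x y ≤ a * x + b * y := by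
    calc min x y = a * min x y + b * min x y := by rw [← add_mul, hab, one_mul]
    _ ≤ a * x + b * y := add_le_add
        (mul_le_mul_of_nonneg_left (min_le_left _ _) ha)
        (mul_le_mul_of_nonneg_left (min_le_right _ _) hb)
  exact lt_of_lt_of_le (lt_min hx hy) h5

lemma convex_S (N : ℕ) {n : ℕ} : Convex ℝ {q : Fin (n+1) → ℝ | memPplus N q} := by
  intro q hq q' hq' a b ha hb hab
  simp only [Set.mem_setOf_eq, memPplus_iff] at *
  intro j hj
  rw [Vv_comb]
  exact comb_pos ha hb hab (hq j hj) (hq' j hj)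

lemma twoN_pos (N : ℕ) (hN : 0 < N) : (0:ℝ) < 2 * N := by positivity

lemma strict_convex (N n : ℕ) (hNn : n < N) (c P : Fin (n+1) → ℝ) (hP : memPplus N P) :
    StrictConvexOn ℝ {q : Fin (n+1) → ℝ | memPplus N q} (Jdual N c P) := by
  have hN : 0 < N := lt_of_le_of_lt (Nat.zero_le n) hNn
  refine ⟨convex_S N, ?_⟩
  intro q hq q' hq' hne a b ha hb hab
  simp only [Set.mem_setOf_eq, memPplus_iff] at hq hq'
  rw [memPplus_iff] at hP
  simp only [smul_eq_mul, Jdual_eq]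
  rw [pairCP_comb]
  -- find a point where the two differ
  have hex : ∃ j ∈ Idx N, Vv N q j ≠ Vv N q' j := by
    by_contra h
    push_neg at h
    apply hne
    have : q - q' = 0 := Vv_inj N n hNn _ (fun j hj => by
      have : Vv N (q - q') j = Vv N q j - Vv N q' j := by
        have := Vv_add N q' (q - q') j
        simp only [add_sub_cancel] at this
        linarith
      rw [this, h j hj, sub_self])
    exact sub_eq_zero.1 this
  obtain ⟨j0, hj0, hj0ne⟩ := hex
  have key : ∑ j ∈ Idx N, (a * (Vv N P j * Real.log (Vv N q j)) +
      b * (Vv N P j * Real.log (Vv N q' j))) <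
      ∑ j ∈ Idx N, Vv N P j * Real.log (Vv N (a • q + b • q') j) := by
    apply Finset.sum_lt_sum
    · intro j hj
      rw [Vv_comb]
      have hcc := (strictConcaveOn_log_Ioi.concaveOn).2
        (Set.mem_Ioi.2 (hq j hj)) (Set.mem_Ioi.2 (hq' j hj)) ha.le hb.le hab
      simp only [smul_eq_mul] at hcc
      nlinarith [hP j hj]
    · refine ⟨j0, hj0, ?_⟩
      rw [Vv_comb]
      have hcc := strictConcaveOn_log_Ioi.2
        (Set.mem_Ioi.2 (hq j0 hj0)) (Set.mem_Ioi.2 (hq' j0 hj0)) hj0ne ha hb hab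
      simp only [smul_eq_mul] at hcc
      nlinarith [hP j0 hj0]
  rw [Finset.sum_add_distrib, ← Finset.mul_sum, ← Finset.mul_sum] at key
  have h2N := twoN_pos N hN
  have := (div_lt_div_iff_of_pos_right h2N).2 key
  rw [add_div] at this
  have ha' : (a * ∑ j ∈ Idx N, Vv N P j * Real.log (Vv N q j)) / (2*(N:ℝ))
      = a * ((∑ j ∈ Idx N, Vv N P j * Real.log (Vv N q j)) / (2*N)) := by ring
  have hb' : (b * ∑ j ∈ Idx N, Vv N P j * Real.log (Vv N q' j)) / (2*(N:ℝ))
      = b * ((∑ j ∈ Idx N, Vv N P j * Real.log (Vv N q' j)) / (2*N)) := by ring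
  linarith [this]

/-! ### existence of a minimizer -/

def qone (n : ℕ) : Fin (n+1) → ℝ := fun k => if k = 0 then 1 else 0

lemma Vv_qone (N n : ℕ) (j : ℤ) : Vv N (qone n) j = 1 := by
  unfold Vv qone
  simp only [ite_mul, one_mul, zero_mul]
  rw [Finset.sum_ite_eq' Finset.univ (0 : Fin (n+1)) (fun k => bb N j k)]
  simp only [Finset.mem_univ, if_true]
  unfold bb
  norm_num

lemma qone_ne (n : ℕ) : qone n ≠ 0 := by
  intro h
  have := congrFun h 0
  simp [qone] at this

lemma closed_cone (N : ℕ) {n : ℕ} (δ : ℝ) :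
    IsClosed {q : Fin (n+1) → ℝ | ∀ j ∈ Idx N, δ ≤ Vv N q j} := by
  have : {q : Fin (n+1) → ℝ | ∀ j ∈ Idx N, δ ≤ Vv N q j}
      = ⋂ j ∈ Idx N, {q | δ ≤ Vv N q j} := by ext q; simp
  rw [this]
  exact isClosed_biInter fun j _ => isClosed_le continuous_const (Vv_cont N j)

lemma exists_eps (N n : ℕ) (hNn : n < N) (c : Fin (n+1) → ℝ) (hc : memCplus N c) :
    ∃ ε > 0, ∀ q : Fin (n+1) → ℝ, (∀ j ∈ Idx N, 0 ≤ Vv N q j) → ε * ‖q‖ ≤ pairCP c q := by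
  set K := Metric.sphere (0 : Fin (n+1) → ℝ) 1 ∩ {q | ∀ j ∈ Idx N, 0 ≤ Vv N q j} with hK
  have hKcpt : IsCompact K := (isCompact_sphere _ _).inter_right (closed_cone N 0)
  have hKne : K.Nonempty := by
    refine ⟨(‖qone n‖ : ℝ)⁻¹ • qone n, ?_, ?_⟩
    · exact mem_sphere_zero_iff_norm.2 (by
        simpa using norm_smul_inv_norm (𝕜 := ℝ) (qone_ne n))
    · intro j hj
      rw [Vv_smul, Vv_qone]
      positivity
  obtain ⟨z, hzK, hzmin⟩ := hKcpt.exists_isMinOn hKne (pairCP_cont c).continuousOn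
  have hz1 : ‖z‖ = 1 := mem_sphere_zero_iff_norm.1 hzK.1
  have hzne : z ≠ 0 := fun h => by rw [h, norm_zero] at hz1; norm_num at hz1
  have hε : 0 < pairCP c z := by
    apply hc z hzne
    intro j hj
    rw [ppC_re]
    exact hzK.2 j hj
  refine ⟨pairCP c z, hε, fun q hq => ?_⟩
  rcases eq_or_ne q 0 with rfl | hqne
  · have : pairCP c (0 : Fin (n+1) → ℝ) = 0 := by simp [pairCP]
    rw [this, norm_zero, mul_zero]
  · have hnq : 0 < ‖q‖ := norm_pos_iff.2 hqne
    have hmem : (‖q‖ : ℝ)⁻¹ • q ∈ K := by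
      constructor
      · exact mem_sphere_zero_iff_norm.2 (by
          simpa using norm_smul_inv_norm (𝕜 := ℝ) hqne)
      · intro j hj
        rw [Vv_smul]
        exact mul_nonneg (by positivity) (hq j hj)
    have := hzmin hmem
    simp only [Set.mem_setOf_eq] at this
    rw [pairCP_smul] at this
    have h2 : pairCP c z ≤ pairCP c q / ‖q‖ := by
      rwa [div_eq_inv_mul]
    calc pairCP c z * ‖q‖ ≤ (pairCP c q / ‖q‖) * ‖q‖ :=
          mul_le_mul_of_nonneg_right h2 hnq.le
    _ = pairCP c q := by field_simp

lemma abs_bb_le (N : ℕ) {n : ℕ} (j : ℤ) (k : Fin (n+1)) : |bb N j k| ≤ 3 := by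
  unfold bb
  have h1 := Real.cos_le_one (Real.pi * j * k / N)
  have h2 := Real.neg_one_le_cos (Real.pi * j * k / N)
  split_ifs <;> rw [abs_le] <;> constructor <;> nlinarith

lemma abs_Vv_le (N : ℕ) {n : ℕ} (q : Fin (n+1) → ℝ) (j : ℤ) :
    |Vv N q j| ≤ (3 * (n+1)) * ‖q‖ := by
  calc |Vv N q j| ≤ ∑ k : Fin (n+1), |q k * bb N j k| :=
        Finset.abs_sum_le_sum_abs _ _
  _ ≤ ∑ _k : Fin (n+1), ‖q‖ * 3 := by
      apply Finset.sum_le_sum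
      intro k _
      rw [abs_mul]
      apply mul_le_mul _ (abs_bb_le N j k) (abs_nonneg _) (norm_nonneg q)
      rw [← Real.norm_eq_abs]
      exact norm_le_pi_norm q k
  _ = (3 * (n+1)) * ‖q‖ := by
      rw [Finset.sum_const, Finset.card_univ, Fintype.card_fin]
      push_cast
      ring

lemma abs_pairCP_le {n : ℕ} (c q : Fin (n+1) → ℝ) :
    |pairCP c q| ≤ (2 * (∑ k : Fin (n+1), |c k|) + |c 0|) * ‖q‖ := by
  have h1 : ∀ k, |q k| ≤ ‖q‖ := fun k => by
    rw [← Real.norm_eq_abs]; exact norm_le_pi_norm q k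
  have h2 : |∑ k : Fin (n+1), c k * q k| ≤ (∑ k : Fin (n+1), |c k|) * ‖q‖ := by
    calc |∑ k : Fin (n+1), c k * q k| ≤ ∑ k : Fin (n+1), |c k * q k| :=
          Finset.abs_sum_le_sum_abs _ _
    _ ≤ ∑ k : Fin (n+1), |c k| * ‖q‖ := by
        apply Finset.sum_le_sum
        intro k _
        rw [abs_mul]
        exact mul_le_mul_of_nonneg_left (h1 k) (abs_nonneg _)
    _ = (∑ k : Fin (n+1), |c k|) * ‖q‖ := by rw [← Finset.sum_mul]
  calc |pairCP c q| ≤ |2 * ∑ k : Fin (n+1), c k * q k| + |c 0 * q 0| := abs_sub _ _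
  _ ≤ 2 * ((∑ k : Fin (n+1), |c k|) * ‖q‖) + |c 0| * ‖q‖ := by
      rw [abs_mul, abs_mul, (by norm_num : |(2:ℝ)| = 2)]
      linarith [mul_le_mul_of_nonneg_left h2 (by norm_num : (0:ℝ) ≤ 2),
        mul_le_mul_of_nonneg_left (h1 0) (abs_nonneg (c 0))]
  _ = (2 * (∑ k : Fin (n+1), |c k|) + |c 0|) * ‖q‖ := by ring

lemma tendsto_coercive (ε A Cb : ℝ) (hε : 0 < ε) (hCb : 0 < Cb) :
    Filter.Tendsto (fun r : ℝ => ε * r - A * Real.log (Cb * r)) Filter.atTop Filter.atTop := by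
  have h2 := (Real.isLittleO_log_id_atTop.const_mul_left A).bound
    (show (0:ℝ) < ε/2 by positivity)
  have base : Filter.Tendsto (fun r : ℝ => ε/2 * r + (-(A * Real.log Cb)))
      Filter.atTop Filter.atTop :=
    Filter.tendsto_atTop_add_const_right _ _ (Filter.tendsto_id.const_mul_atTop (by positivity))
  apply Filter.tendsto_atTop_mono' _ _ base
  filter_upwards [h2, Filter.eventually_gt_atTop 0] with x hx hx0
  rw [Real.log_mul (ne_of_gt hCb) (ne_of_gt hx0)]
  simp only [Real.norm_eq_abs, id_eq, abs_of_pos hx0] at hx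
  linarith [le_abs_self (A * Real.log x)]

lemma Idx_nonempty (N : ℕ) (hN : 0 < N) : (Idx N).Nonempty :=
  ⟨N, by simp only [Idx, Finset.mem_Icc]; omega⟩

lemma memPplus_ne_zero (N : ℕ) {n : ℕ} (hN : 0 < N) {q : Fin (n+1) → ℝ}
    (hq : memPplus N q) : q ≠ 0 := by
  intro h
  obtain ⟨j, hj⟩ := Idx_nonempty N hN
  have := (memPplus_iff N q).1 hq j hj
  rw [h] at this
  simp [Vv] at this

lemma exists_min (N n : ℕ) (hNn : n < N) (c P : Fin (n+1) → ℝ)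
    (hc : memCplus N c) (hP : memPplus N P) :
    ∃ Qhat, memPplus N Qhat ∧ ∀ q, memPplus N q → Jdual N c P Qhat ≤ Jdual N c P q := by
  have hN : 0 < N := lt_of_le_of_lt (Nat.zero_le n) hNn
  have h2N : (0:ℝ) < 2 * N := twoN_pos N hN
  have hP' := (memPplus_iff N P).1 hP
  have hIdxne := Idx_nonempty N hN
  obtain ⟨ε, hε, heps⟩ := exists_eps N n hNn c hc
  set Cb : ℝ := 3 * ((n:ℝ) + 1) with hCbdef
  have hCb : 0 < Cb := by positivity
  set SP : ℝ := ∑ j ∈ Idx N, Vv N P j with hSPdef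
  have hSP : 0 < SP := Finset.sum_pos (fun j hj => hP' j hj) hIdxne
  set A : ℝ := SP / (2 * N) with hAdef
  have hA : 0 < A := by positivity
  set Dc : ℝ := 2 * (∑ k : Fin (n+1), |c k|) + |c 0| with hDcdef
  have hDc : 0 ≤ Dc := by positivity
  have hq0S : memPplus N (qone n) := by
    rw [memPplus_iff]; intro j hj; rw [Vv_qone]; norm_num
  set m₀ : ℝ := Jdual N c P (qone n) with hm0def
  -- lower bound
  have lb : ∀ q, memPplus N q → ε * ‖q‖ - A * Real.log (Cb * ‖q‖) ≤ Jdual N c P q := by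
    intro q hqS
    have hq' := (memPplus_iff N q).1 hqS
    have hnq : 0 < ‖q‖ := norm_pos_iff.2 (memPplus_ne_zero N hN hqS)
    rw [Jdual_eq]
    have hpair : ε * ‖q‖ ≤ pairCP c q := heps q (fun j hj => (hq' j hj).le)
    have hlogsum : ∑ j ∈ Idx N, Vv N P j * Real.log (Vv N q j)
        ≤ SP * Real.log (Cb * ‖q‖) := by
      rw [hSPdef, Finset.sum_mul]
      apply Finset.sum_le_sum
      intro j hj
      apply mul_le_mul_of_nonneg_left _ (hP' j hj).le
      apply Real.log_le_log (hq' j hj)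
      calc Vv N q j ≤ |Vv N q j| := le_abs_self _
      _ ≤ Cb * ‖q‖ := abs_Vv_le N q j
    have hdiv : (∑ j ∈ Idx N, Vv N P j * Real.log (Vv N q j)) / (2*N)
        ≤ A * Real.log (Cb * ‖q‖) := by
      rw [hAdef, div_mul_eq_mul_div]
      gcongr
    linarith
  -- norm bound on the sublevel set
  obtain ⟨R₁, hR₁⟩ := Filter.eventually_atTop.1
    ((tendsto_coercive ε A Cb hε hCb).eventually_gt_atTop m₀)
  set R : ℝ := max R₁ ‖qone n‖ with hRdef
  have hRpos : 0 < R := lt_of_lt_of_le (norm_pos_iff.2 (qone_ne n)) (le_max_right _ _)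
  have hRb : ∀ q, memPplus N q → Jdual N c P q ≤ m₀ → ‖q‖ ≤ R := by
    intro q hqS hJq
    by_contra h
    push_neg at h
    have h1 : R₁ ≤ ‖q‖ := le_of_lt (lt_of_le_of_lt (le_max_left _ _) h)
    have := hR₁ ‖q‖ h1
    linarith [lb q hqS]
  -- lower bound on values on the sublevel set
  set Pmin : ℝ := (Idx N).inf' hIdxne (fun j => Vv N P j) with hPmindef
  have hPmin : 0 < Pmin := (Finset.lt_inf'_iff hIdxne).2 hP'
  set Mlog : ℝ := max (Real.log (Cb * R)) 0 with hMlogdef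
  have hMlog : 0 ≤ Mlog := le_max_right _ _
  set B : ℝ := -(2*N*(Dc * R + |m₀|) + SP * Mlog) with hBdef
  have hB : B ≤ 0 := by
    rw [hBdef]
    have : 0 ≤ 2*(N:ℝ)*(Dc * R + |m₀|) + SP * Mlog := by positivity
    linarith
  set δ : ℝ := min (Real.exp (B / Pmin)) 1 with hδdef
  have hδ : 0 < δ := lt_min (Real.exp_pos _) one_pos
  have hdel : ∀ q, memPplus N q → Jdual N c P q ≤ m₀ → ∀ j ∈ Idx N, δ ≤ Vv N q j := by
    intro q hqS hJq j0 hj0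
    have hq' := (memPplus_iff N q).1 hqS
    have hqR := hRb q hqS hJq
    have key1 : ∀ j ∈ Idx N, Real.log (Vv N q j) ≤ Mlog := by
      intro j hj
      refine le_trans (Real.log_le_log (hq' j hj) ?_) (le_max_left _ _)
      calc Vv N q j ≤ |Vv N q j| := le_abs_self _
      _ ≤ Cb * ‖q‖ := abs_Vv_le N q j
      _ ≤ Cb * R := mul_le_mul_of_nonneg_left hqR hCb.le
    have key2 : ∑ j ∈ Idx N, Vv N P j * Real.log (Vv N q j)
        = 2*N*(pairCP c q - Jdual N c P q) := by
      have := Jdual_eq N c P q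
      field_simp at this ⊢
      linarith
    have hrest : ∑ j ∈ (Idx N).erase j0, Vv N P j * Real.log (Vv N q j) ≤ SP * Mlog := by
      calc ∑ j ∈ (Idx N).erase j0, Vv N P j * Real.log (Vv N q j)
          ≤ ∑ j ∈ (Idx N).erase j0, Vv N P j * Mlog := by
            apply Finset.sum_le_sum
            intro j hj
            exact mul_le_mul_of_nonneg_left (key1 j (Finset.mem_of_mem_erase hj))
              (hP' j (Finset.mem_of_mem_erase hj)).le
      _ = (∑ j ∈ (Idx N).erase j0, Vv N P j) * Mlog := by rw [Finset.sum_mul]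
      _ ≤ SP * Mlog := by
          apply mul_le_mul_of_nonneg_right _ hMlog
          apply Finset.sum_le_sum_of_subset_of_nonneg (Finset.erase_subset _ _)
          intro j hj _
          exact (hP' j hj).le
    have hsplit : Vv N P j0 * Real.log (Vv N q j0)
        + ∑ j ∈ (Idx N).erase j0, Vv N P j * Real.log (Vv N q j)
        = ∑ j ∈ Idx N, Vv N P j * Real.log (Vv N q j) :=
      Finset.add_sum_erase (Idx N) (fun j => Vv N P j * Real.log (Vv N q j)) hj0
    have hpairlow : -(Dc * R) ≤ pairCP c q := by
      have h1 := abs_pairCP_le c q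
      have h2 : (2 * (∑ k : Fin (n+1), |c k|) + |c 0|) * ‖q‖ ≤ Dc * R := by
        rw [hDcdef]
        exact mul_le_mul_of_nonneg_left hqR hDc
      linarith [neg_abs_le (pairCP c q)]
    have hPlog : B ≤ Vv N P j0 * Real.log (Vv N q j0) := by
      have h3 : 2*(N:ℝ)*(-(Dc*R) - |m₀|) ≤ 2*N*(pairCP c q - Jdual N c P q) := by
        have h7 : Jdual N c P q ≤ |m₀| := le_trans hJq (le_abs_self _)
        have h6 : -(Dc*R) - |m₀| ≤ pairCP c q - Jdual N c P q := sub_le_sub hpairlow h7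
        exact mul_le_mul_of_nonneg_left h6 h2N.le
      rw [hBdef]
      have h8 : 2*(N:ℝ)*(-(Dc*R) - |m₀|) = -(2*N*(Dc * R + |m₀|)) := by ring
      linarith [hsplit, hrest, key2]
    have hlog : B / Pmin ≤ Real.log (Vv N q j0) := by
      have hPj0 : 0 < Vv N P j0 := hP' j0 hj0
      have h4 : B / Pmin ≤ B / Vv N P j0 := by
        rw [div_le_div_iff₀ hPmin hPj0]
        nlinarith [Finset.inf'_le (fun j => Vv N P j) hj0]
      refine le_trans h4 ?_
      rw [div_le_iff₀ hPj0]
      linarith [hPlog]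
    calc δ ≤ Real.exp (B / Pmin) := min_le_left _ _
    _ ≤ Real.exp (Real.log (Vv N q j0)) := Real.exp_le_exp.2 hlog
    _ = Vv N q j0 := Real.exp_log (hq' j0 hj0)
  -- the compact set
  set K' : Set (Fin (n+1) → ℝ) :=
    Metric.closedBall 0 R ∩ {q | ∀ j ∈ Idx N, δ ≤ Vv N q j} with hK'def
  have hK'cpt : IsCompact K' := (isCompact_closedBall _ _).inter_right (closed_cone N δ)
  have hq0K' : qone n ∈ K' := by
    constructor
    · exact Metric.mem_closedBall.2 (by
        rw [dist_zero_right]; exact le_max_right _ _)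
    · intro j hj
      rw [Vv_qone]
      exact min_le_right _ _
  have hcont : ContinuousOn (Jdual N c P) K' := by
    have hJfun : Jdual N c P = fun q =>
        pairCP c q - (∑ j ∈ Idx N, Vv N P j * Real.log (Vv N q j)) / (2*N) :=
      funext (Jdual_eq N c P)
    rw [hJfun]
    apply ContinuousOn.sub (pairCP_cont c).continuousOn
    apply ContinuousOn.div_const
    apply continuousOn_finset_sum
    intro j hj
    apply ContinuousOn.mul continuousOn_const
    apply ContinuousOn.comp Real.continuousOn_log (Vv_cont N j).continuousOn
    intro q hq
    simp only [Set.mem_compl_iff, Set.mem_singleton_iff]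
    exact ne_of_gt (lt_of_lt_of_le hδ (hq.2 j hj))
  obtain ⟨Qhat, hQK', hQmin⟩ := hK'cpt.exists_isMinOn ⟨qone n, hq0K'⟩ hcont
  have hQS : memPplus N Qhat := by
    rw [memPplus_iff]
    intro j hj
    exact lt_of_lt_of_le hδ (hQK'.2 j hj)
  refine ⟨Qhat, hQS, fun q hqS => ?_⟩
  by_cases hJ : Jdual N c P q ≤ m₀
  · have hqK' : q ∈ K' := by
      constructor
      · exact Metric.mem_closedBall.2 (by rw [dist_zero_right]; exact hRb q hqS hJ)
      · exact fun j hj => hdel q hqS hJ j hj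
    have := hQmin hqK'
    simpa using this
  · push_neg at hJ
    have h5 := hQmin hq0K'
    simp only [Set.mem_setOf_eq] at h5
    have : Jdual N c P Qhat ≤ m₀ := h5
    linarith

/-! ### moment conditions at the minimizer -/

lemma Vv_even (N : ℕ) {n : ℕ} (q : Fin (n+1) → ℝ) (j : ℤ) : Vv N q (-j) = Vv N q j := by
  unfold Vv bb
  refine Finset.sum_congr rfl fun k _ => ?_
  have : Real.pi * ((-j : ℤ) : ℝ) * k / N = -(Real.pi * j * k / N) := by push_cast; ring
  rw [this, Real.cos_neg]

lemma im_cancel (N : ℕ) (hN : 0 < N) (k : ℕ) (r : ℤ → ℝ) (hr : ∀ j, r (-j) = r j) :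
    ∑ j ∈ Idx N, zeta N j ^ (k : ℤ) * ((r j : ℝ) : ℂ) =
      ((∑ j ∈ Idx N, Real.cos (Real.pi * j * k / N) * r j : ℝ) : ℂ) := by
  have hterm : ∀ j : ℤ, zeta N j ^ (k : ℤ) * ((r j : ℝ) : ℂ) =
      ((Real.cos (Real.pi * j * k / N) * r j : ℝ) : ℂ)
        + ((Real.sin (Real.pi * j * k / N) * r j : ℝ) : ℂ) * Complex.I := by
    intro j
    rw [zeta_zpow]
    have harg : (Real.pi : ℂ) * Complex.I * (((j:ℤ):ℂ) * (((k:ℕ):ℤ):ℂ)) / ((N:ℕ):ℂ)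
        = ((Real.pi * j * k / N : ℝ) : ℂ) * Complex.I := by push_cast; ring
    rw [harg, Complex.exp_mul_I, ← Complex.ofReal_cos, ← Complex.ofReal_sin]
    push_cast
    ring
  rw [Finset.sum_congr rfl (fun j _ => hterm j), Finset.sum_add_distrib,
    ← Finset.sum_mul, ← Complex.ofReal_sum, ← Complex.ofReal_sum]
  have hsin : ∑ j ∈ Idx N, Real.sin (Real.pi * j * k / N) * r j = 0 := by
    have hsplit : Idx N = insert (N : ℤ) (Finset.Icc (-(N:ℤ)+1) ((N:ℤ)-1)) := by
      ext x
      simp only [Idx, Finset.mem_Icc, Finset.mem_insert]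
      omega
    have hNnotin : (N:ℤ) ∉ Finset.Icc (-(N:ℤ)+1) ((N:ℤ)-1) := by
      simp only [Finset.mem_Icc]
      omega
    rw [hsplit, Finset.sum_insert hNnotin]
    have h1 : Real.sin (Real.pi * ((N:ℤ):ℝ) * k / N) = 0 := by
      have hNne : ((N:ℤ):ℝ) ≠ 0 := by exact_mod_cast (Int.natCast_pos.2 hN).ne'
      have : Real.pi * ((N:ℤ):ℝ) * k / N = (k:ℝ) * Real.pi := by
        push_cast
        field_simp
      rw [this, Real.sin_nat_mul_pi]
    rw [h1, zero_mul, zero_add]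
    refine Finset.sum_involution (fun j _ => -j) (fun j hj => ?_) (fun j hj hfne => ?_)
      (fun j hj => ?_) (fun j hj => neg_neg j)
    · have harg : Real.pi * ((-j : ℤ):ℝ) * k / N = -(Real.pi * j * k / N) := by
        push_cast; ring
      rw [harg, Real.sin_neg, hr]
      ring
    · intro h
      have h' : -j = j := h
      have hj0 : j = 0 := by omega
      apply hfne
      rw [hj0]
      norm_num
    · simp only [Finset.mem_Icc] at hj ⊢
      omega
  rw [hsin]
  simp

lemma Vv_single (N : ℕ) {n : ℕ} (k : Fin (n+1)) (j : ℤ) :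
    Vv N (fun m => if m = k then (1:ℝ) else 0) j = bb N j k := by
  unfold Vv
  simp only [ite_mul, one_mul, zero_mul]
  rw [Finset.sum_ite_eq' Finset.univ k (fun m => bb N j m)]
  simp

lemma pairCP_single {n : ℕ} (c : Fin (n+1) → ℝ) (k : Fin (n+1)) :
    pairCP c (fun m => if m = k then (1:ℝ) else 0) =
      2 * c k - c 0 * (if k = 0 then 1 else 0) := by
  unfold pairCP
  have : ∑ m : Fin (n+1), c m * (if m = k then (1:ℝ) else 0) = c k := by
    simp only [mul_ite, mul_one, mul_zero]
    rw [Finset.sum_ite_eq' Finset.univ k c]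
    simp
  rw [this]
  rcases eq_or_ne k 0 with rfl | h
  · simp
  · rw [if_neg h]
    have h2 : (0 : Fin (n+1)) ≠ k := fun hh => h hh.symm
    simp [h2]

lemma moment_of_min (N n : ℕ) (hNn : n < N) (c P Qhat : Fin (n+1) → ℝ)
    (hP : memPplus N P) (hQ : memPplus N Qhat)
    (hmin : ∀ q, memPplus N q → Jdual N c P Qhat ≤ Jdual N c P q) :
    momentConds N P Qhat c := by
  have hN : 0 < N := lt_of_le_of_lt (Nat.zero_le n) hNn
  have h2N : (0:ℝ) < 2 * N := twoN_pos N hN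
  have hIdxne := Idx_nonempty N hN
  have hP' := (memPplus_iff N P).1 hP
  have hQ' := (memPplus_iff N Qhat).1 hQ
  intro k
  set d : Fin (n+1) → ℝ := fun m => if m = k then 1 else 0 with hd
  have hVd : ∀ j, Vv N d j = bb N j k := fun j => Vv_single N k j
  set δ' : ℝ := (Idx N).inf' hIdxne (fun j => Vv N Qhat j) with hδ'def
  have hδ' : 0 < δ' := (Finset.lt_inf'_iff hIdxne).2 hQ'
  set Cd : ℝ := 3 * ((n:ℝ) + 1) * ‖d‖ + 1 with hCddef
  have hCd : 0 < Cd := by positivity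
  set t₀ : ℝ := δ' / Cd with ht₀def
  have ht₀ : 0 < t₀ := by positivity
  have hmem : ∀ t : ℝ, |t| < t₀ → memPplus N (Qhat + t • d) := by
    intro t ht
    rw [memPplus_iff]
    intro j hj
    have h1 : Vv N (Qhat + t • d) j = Vv N Qhat j + t * Vv N d j := by
      rw [Vv_add, Vv_smul]
    rw [h1]
    have h2 : |t * Vv N d j| < δ' := by
      rw [abs_mul]
      calc |t| * |Vv N d j| ≤ |t| * (3 * ((n:ℝ)+1) * ‖d‖) :=
            mul_le_mul_of_nonneg_left (abs_Vv_le N d j) (abs_nonneg t)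
      _ ≤ |t| * Cd := by
            apply mul_le_mul_of_nonneg_left _ (abs_nonneg t)
            rw [hCddef]; linarith
      _ < t₀ * Cd := by
            apply mul_lt_mul_of_pos_right ht hCd
      _ = δ' := by rw [ht₀def, div_mul_cancel₀ _ (ne_of_gt hCd)]
    have h4 : δ' ≤ Vv N Qhat j := Finset.inf'_le _ hj
    have h5 := neg_abs_le (t * Vv N d j)
    linarith
  have hg : ∀ t : ℝ, Jdual N c P (Qhat + t • d) =
      (pairCP c Qhat + t * pairCP c d) -
        (∑ j ∈ Idx N, Vv N P j * Real.log (Vv N Qhat j + t * Vv N d j)) / (2*N) := by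
    intro t
    rw [Jdual_eq, pairCP_add, pairCP_smul]
    congr 2
    refine Finset.sum_congr rfl fun j _ => ?_
    rw [Vv_add, Vv_smul]
  set L : ℝ := pairCP c d -
      (∑ j ∈ Idx N, Vv N P j * (Vv N d j / Vv N Qhat j)) / (2*N) with hLdef
  have hder : HasDerivAt (fun t : ℝ => Jdual N c P (Qhat + t • d)) L 0 := by
    have hfun : (fun t : ℝ => Jdual N c P (Qhat + t • d)) = fun t : ℝ =>
        (pairCP c Qhat + t * pairCP c d) -
        (∑ j ∈ Idx N, Vv N P j * Real.log (Vv N Qhat j + t * Vv N d j)) / (2*N) := funext hg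
    rw [hfun, hLdef]
    have h1 : HasDerivAt (fun t : ℝ => pairCP c Qhat + t * pairCP c d) (pairCP c d) 0 := by
      simpa using ((hasDerivAt_id (0:ℝ)).mul_const (pairCP c d)).const_add (pairCP c Qhat)
    have h2 : ∀ j ∈ Idx N, HasDerivAt
        (fun t : ℝ => Vv N P j * Real.log (Vv N Qhat j + t * Vv N d j))
        (Vv N P j * (Vv N d j / Vv N Qhat j)) 0 := by
      intro j hj
      have hb : HasDerivAt (fun t : ℝ => Vv N Qhat j + t * Vv N d j) (Vv N d j) 0 := by
        simpa using ((hasDerivAt_id (0:ℝ)).mul_const (Vv N d j)).const_add (Vv N Qhat j)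
      have hne : Vv N Qhat j + 0 * Vv N d j ≠ 0 := by
        rw [zero_mul, add_zero]; exact ne_of_gt (hQ' j hj)
      have hlog := hb.log hne
      have heq : Vv N d j / (Vv N Qhat j + 0 * Vv N d j) = Vv N d j / Vv N Qhat j := by
        rw [zero_mul, add_zero]
      rw [heq] at hlog
      exact hlog.const_mul _
    exact h1.sub ((HasDerivAt.fun_sum h2).div_const (2*N))
  have hloc : IsLocalMin (fun t : ℝ => Jdual N c P (Qhat + t • d)) 0 := by
    have hball : ∀ t ∈ Metric.ball (0:ℝ) t₀,
        (fun t : ℝ => Jdual N c P (Qhat + t • d)) 0 ≤ (fun t : ℝ => Jdual N c P (Qhat + t • d)) t := by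
      intro t ht
      simp only [zero_smul, add_zero]
      apply hmin
      apply hmem
      rwa [Metric.mem_ball, Real.dist_eq, sub_zero] at ht
    exact Filter.eventually_of_mem (Metric.ball_mem_nhds 0 ht₀) hball
  have hL0 : L = 0 := hloc.hasDerivAt_eq_zero hder
  set rr : ℤ → ℝ := fun j => Vv N P j / Vv N Qhat j with hrrdef
  have hrr_even : ∀ j, rr (-j) = rr j := fun j => by
    rw [hrrdef]; simp only; rw [Vv_even, Vv_even]
  have hrel : pairCP c d
      = (∑ j ∈ Idx N, (2 * Real.cos (Real.pi * j * (k.val:ℕ) / N) * rr j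
          - (if k = 0 then (1:ℝ) else 0) * rr j)) / (2*N) := by
    have hsum : ∑ j ∈ Idx N, Vv N P j * (Vv N d j / Vv N Qhat j)
        = ∑ j ∈ Idx N, (2 * Real.cos (Real.pi * j * (k.val:ℕ) / N) * rr j
          - (if k = 0 then (1:ℝ) else 0) * rr j) := by
      refine Finset.sum_congr rfl fun j _ => ?_
      rw [hVd j]
      unfold bb
      rw [hrrdef]
      simp only
      ring
    rw [hLdef] at hL0
    rw [← hsum]
    linarith [hL0]
  have hkey : ∑ j ∈ Idx N, Real.cos (Real.pi * j * (k.val:ℕ) / N) * rr j = 2*N * c k := by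
    rw [pairCP_single] at hrel
    rcases eq_or_ne k 0 with rfl | hk0
    · simp only [if_pos rfl] at hrel
      have hcos1 : ∀ j ∈ Idx N, Real.cos (Real.pi * j * (((0:Fin (n+1)).val:ℕ)) / N) = 1 := by
        intro j _
        simp [Fin.val_zero]
      rw [Finset.sum_congr rfl (fun j hj => by rw [hcos1 j hj])]
      rw [Finset.sum_congr rfl (fun j hj => by rw [hcos1 j hj])] at hrel
      simp only [one_mul, mul_one] at hrel ⊢
      rw [Finset.sum_sub_distrib] at hrel
      have : ∑ j ∈ Idx N, 2 * rr j = 2 * ∑ j ∈ Idx N, rr j := by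
        rw [Finset.mul_sum]
      rw [this] at hrel
      field_simp at hrel
      simp only [if_true, one_mul] at hrel
      linarith
    · simp only [if_neg hk0] at hrel
      simp only [zero_mul, sub_zero] at hrel
      have : ∑ j ∈ Idx N, 2 * Real.cos (Real.pi * j * (k.val:ℕ) / N) * rr j
          = 2 * ∑ j ∈ Idx N, Real.cos (Real.pi * j * (k.val:ℕ) / N) * rr j := by
        rw [Finset.mul_sum]
        exact Finset.sum_congr rfl fun j _ => by ring
      rw [this] at hrel
      field_simp at hrel
      linarith
  have hre : ∀ j, ((ppC P (zeta N j)).re / (ppC Qhat (zeta N j)).re : ℝ) = rr j := fun j => by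
    rw [ppC_re, ppC_re]
  rw [Finset.sum_congr rfl (fun j _ => by rw [hre j])]
  rw [im_cancel N hN k.val rr hrr_even, hkey]
  have h2NC : (2 * (N:ℂ)) ≠ 0 := by
    simp only [ne_eq, mul_eq_zero]
    push_neg
    exact ⟨two_ne_zero, Nat.cast_ne_zero.2 hN.ne'⟩
  push_cast
  field_simp
  exact mul_div_cancel_left₀ _ (Nat.cast_ne_zero.2 hN.ne')

/-- the dual functional `𝕁_P` is strictly convex on `𝔓₊(N)`, attains a
unique minimum there, and the minimizer satisfies the moment conditions. -/
theorem stmt1 (N n : ℕ) (hn : 1 ≤ n) (hNn : n < N)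
    (c P : Fin (n + 1) → ℝ) (hc : memCplus N c) (hP : memPplus N P) :
    StrictConvexOn ℝ {q : Fin (n + 1) → ℝ | memPplus N q} (Jdual N c P) ∧
    ∃ Qhat : Fin (n + 1) → ℝ, memPplus N Qhat ∧
      (∀ q, memPplus N q → Jdual N c P Qhat ≤ Jdual N c P q) ∧
      (∀ q, memPplus N q → (∀ q', memPplus N q' → Jdual N c P q ≤ Jdual N c P q') →
        q = Qhat) ∧
      momentConds N P Qhat c := by
  refine ⟨strict_convex N n hNn c P hP, ?_⟩
  obtain ⟨Qhat, hQS, hQmin⟩ := exists_min N n hNn c P hc hP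
  refine ⟨Qhat, hQS, hQmin, ?_, moment_of_min N n hNn c P Qhat hP hQS hQmin⟩
  intro q hqS hqmin
  by_contra hne
  have h1 : Jdual N c P q ≤ Jdual N c P Qhat := hqmin Qhat hQS
  have h2 : Jdual N c P Qhat ≤ Jdual N c P q := hQmin q hqS
  have hsc := strict_convex N n hNn c P hP
  have hqS' : q ∈ {q : Fin (n+1) → ℝ | memPplus N q} := hqS
  have hQS' : Qhat ∈ {q : Fin (n+1) → ℝ | memPplus N q} := hQS
  have hmid := hsc.1 hqS' hQS' (by norm_num : (0:ℝ) ≤ 1/2) (by norm_num : (0:ℝ) ≤ 1/2)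
    (by norm_num)
  have h3 := hsc.2 hqS' hQS' hne (by norm_num : (0:ℝ) < 1/2) (by norm_num : (0:ℝ) < 1/2)
    (by norm_num)
  have h4 := hQmin _ hmid
  simp only [smul_eq_mul] at h3
  linarith

end
end

section
/- Suppose c = (c_0, …, c_n) ∈ 𝔠₊(N) and P ∈ 𝔓₊(N), and let Q̂ be the unique minimizer over 𝔓₊(N) of the dual functional 𝕁_P. Then among all functions Φ : 𝕋_{2N} → (0, ∞) with Φ(ζ^{−1}) = Φ(ζ) that satisfy the moment conditions (1/2N) Σ_{j=−N+1}^N ζ_j^k Φ(ζ_j) = c_k for k = 0, 1, …, n, the generalized entropy 𝕀_P(Φ) := (1/2N) Σ_{j=−N+1}^N P(ζ_j) log Φ(ζ_j) attains its maximum, and it does so uniquely at Φ = P/Q̂. -/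
open Finset Complex Matrix

noncomputable section

/-- The generalized entropy `𝕀_P(Φ) = (1/2N) Σ_j P(ζ_j) log Φ(ζ_j)`, where the function `Φ`
on `𝕋_{2N}` is represented through its values `Φ j = Φ(ζ_j)`, `j ∈ ℤ`. -/
def entropyP (N : ℕ) {n : ℕ} (P : Fin (n + 1) → ℝ) (Φ : ℤ → ℝ) : ℝ :=
  (∑ j ∈ Idx N, (ppC P (zeta N j)).re * Real.log (Φ j)) / (2 * N)

/-- The constraints on a candidate `Φ : 𝕋_{2N} → (0,∞)`: well-definedness on the discrete
circle (`2N`-periodicity), the symmetry `Φ(ζ⁻¹) = Φ(ζ)`, strict positivity, and the moment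
conditions `(1/2N) Σ_j ζ_j^k Φ(ζ_j) = c_k` for `k = 0, …, n`. -/
def feasibleΦ (N : ℕ) {n : ℕ} (c : Fin (n + 1) → ℝ) (Φ : ℤ → ℝ) : Prop :=
  (∀ j : ℤ, Φ (j + 2 * N) = Φ j) ∧ (∀ j : ℤ, Φ (-j) = Φ j) ∧ (∀ j : ℤ, 0 < Φ j) ∧
    ∀ k : Fin (n + 1),
      (∑ j ∈ Idx N, zeta N j ^ (k.val : ℤ) * ((Φ j : ℝ) : ℂ)) / (2 * N) = (c k : ℂ)

namespace StmtAux

lemma zeta_ne_zero (N : ℕ) (j : ℤ) : zeta N j ≠ 0 := Complex.exp_ne_zero _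

lemma zeta_neg (N : ℕ) (j : ℤ) : zeta N (-j) = (zeta N j)⁻¹ := by
  rw [zeta, zeta, ← Complex.exp_neg]
  congr 1
  push_cast
  ring

lemma zeta_period (N : ℕ) (hN : 0 < N) (j m : ℤ) : zeta N (j + 2 * N * m) = zeta N j := by
  rw [zeta, zeta]
  have hN' : (N : ℂ) ≠ 0 := by exact_mod_cast Nat.cast_ne_zero.mpr hN.ne'
  have h : (Real.pi : ℂ) * Complex.I * ((j : ℂ) + 2 * N * m) / N
      = Real.pi * Complex.I * j / N + m * (2 * Real.pi * Complex.I) := by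
    field_simp
  rw [show ((j + 2 * N * m : ℤ) : ℂ) = (j : ℂ) + 2 * N * m by push_cast; ring, h,
    Complex.exp_add, Complex.exp_int_mul_two_pi_mul_I, mul_one]

lemma zeta_conj (N : ℕ) (j : ℤ) : (starRingEnd ℂ) (zeta N j) = zeta N (-j) := by
  rw [zeta, zeta, ← Complex.exp_conj]
  congr 1
  simp only [map_div₀, _root_.map_mul, Complex.conj_I, Complex.conj_ofReal, map_intCast, map_natCast]
  push_cast
  ring

lemma zeta_zpow_neg (N : ℕ) (j m : ℤ) :
    zeta N j ^ (-m) = (starRingEnd ℂ) (zeta N j ^ m) := by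
  rw [map_zpow₀, zeta_conj, zeta_neg, _root_.inv_zpow, ← _root_.zpow_neg]


lemma ppC_inv {n : ℕ} (p : Fin (n + 1) → ℝ) (z : ℂ) : ppC p z⁻¹ = ppC p z := by
  unfold ppC
  congr 1
  apply Finset.sum_congr rfl
  intro k _
  rw [_root_.inv_zpow', _root_.inv_zpow', neg_neg, add_comm]

lemma ppC_conj {n : ℕ} (p : Fin (n + 1) → ℝ) (N : ℕ) (j : ℤ) :
    (starRingEnd ℂ) (ppC p (zeta N j)) = ppC p (zeta N j) := by
  unfold ppC
  rw [map_sub, map_sum]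
  congr 1
  · apply Finset.sum_congr rfl
    intro k _
    have h1 : (starRingEnd ℂ) (zeta N j ^ (k.val : ℤ)) = zeta N j ^ (-(k.val : ℤ)) :=
      (zeta_zpow_neg N j _).symm
    have h2 : (starRingEnd ℂ) (zeta N j ^ (-(k.val : ℤ))) = zeta N j ^ ((k.val : ℤ)) := by
      have := (zeta_zpow_neg N j (-(k.val : ℤ))).symm
      rwa [neg_neg] at this
    rw [_root_.map_mul, map_add, Complex.conj_ofReal, h1, h2, add_comm]
  · exact Complex.conj_ofReal _

lemma ppC_real {n : ℕ} (p : Fin (n + 1) → ℝ) (N : ℕ) (j : ℤ) :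
    (((ppC p (zeta N j)).re : ℝ) : ℂ) = ppC p (zeta N j) :=
  Complex.conj_eq_iff_re.mp (ppC_conj p N j)


lemma periodic_iter {M : Type*} (g : ℤ → M) (N : ℕ) (hg : ∀ j : ℤ, g (j + 2 * N) = g j)
    (j m : ℤ) : g (j + 2 * N * m) = g j := by
  induction m using Int.induction_on with
  | zero => simp
  | succ k ih =>
      rw [show j + 2 * (N : ℤ) * ((k : ℤ) + 1) = (j + 2 * N * k) + 2 * N by ring, hg, ih]
  | pred k ih =>
      have h := hg (j + 2 * N * (-(k : ℤ) - 1))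
      rw [show j + 2 * (N : ℤ) * (-(k : ℤ) - 1) + 2 * N = j + 2 * N * (-(k : ℤ)) by ring] at h
      rw [h] at ih
      exact ih

lemma exists_rep (N : ℕ) (hN : 0 < N) (j : ℤ) :
    ∃ j' m : ℤ, j' ∈ Idx N ∧ j = j' + 2 * N * m := by
  refine ⟨j - 2 * N * ((j + N - 1) / (2 * N)), (j + N - 1) / (2 * N), ?_, by ring⟩
  have h0 : (0 : ℤ) < 2 * N := by positivity
  have h1 := Int.emod_nonneg (j + N - 1) h0.ne'
  have h2 := Int.emod_lt_of_pos (j + N - 1) h0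
  have h3 : (j + N - 1) % (2 * N) = (j + N - 1) - 2 * N * ((j + N - 1) / (2 * N)) :=
    Int.emod_def _ _
  simp only [Idx, Finset.mem_Icc]
  constructor <;> linarith

lemma sum_Idx_comp_neg {M : Type*} [AddCommMonoid M] (N : ℕ) (hN : 0 < N) (g : ℤ → M)
    (hg : ∀ j : ℤ, g (j + 2 * N) = g j) :
    ∑ j ∈ Idx N, g (-j) = ∑ j ∈ Idx N, g j := by
  have h1 : ∑ j ∈ Idx N, g (-j) = ∑ j ∈ Finset.Icc (-(N : ℤ)) ((N : ℤ) - 1), g j := by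
    apply Finset.sum_nbij' (fun j => -j) (fun j => -j)
    · intro a ha; simp only [Idx, Finset.mem_Icc] at *; omega
    · intro a ha; simp only [Idx, Finset.mem_Icc] at *; omega
    · intro a _; ring
    · intro a _; ring
    · intro a _; rfl
  have e1 : Finset.Icc (-(N : ℤ)) ((N : ℤ) - 1)
      = insert (-(N : ℤ)) (Finset.Icc (-(N : ℤ) + 1) ((N : ℤ) - 1)) := by
    ext x; simp only [Finset.mem_Icc, Finset.mem_insert]; omega
  have e2 : Idx N = insert ((N : ℤ)) (Finset.Icc (-(N : ℤ) + 1) ((N : ℤ) - 1)) := by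
    ext x; simp only [Idx, Finset.mem_Icc, Finset.mem_insert]; omega
  have hmem1 : (-(N : ℤ)) ∉ Finset.Icc (-(N : ℤ) + 1) ((N : ℤ) - 1) := by
    simp only [Finset.mem_Icc]; omega
  have hmem2 : ((N : ℤ)) ∉ Finset.Icc (-(N : ℤ) + 1) ((N : ℤ) - 1) := by
    simp only [Finset.mem_Icc]; omega
  have hN2 : g (-(N : ℤ)) = g N := by
    have := hg (-(N : ℤ))
    rw [show -(N : ℤ) + 2 * N = (N : ℤ) by ring] at this
    exact this.symm
  rw [h1, e1, e2, Finset.sum_insert hmem1, Finset.sum_insert hmem2, hN2]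

lemma ppC_add_smul {n : ℕ} (p d : Fin (n + 1) → ℝ) (t : ℝ) (z : ℂ) :
    ppC (fun k => p k + t * d k) z = ppC p z + (t : ℂ) * ppC d z := by
  unfold ppC
  push_cast
  have h : ∀ k : Fin (n + 1), ((p k : ℂ) + (t : ℂ) * (d k : ℂ)) * (z ^ (k.val : ℤ) + z ^ (-(k.val : ℤ)))
      = (p k : ℂ) * (z ^ (k.val : ℤ) + z ^ (-(k.val : ℤ)))
        + (t : ℂ) * ((d k : ℂ) * (z ^ (k.val : ℤ) + z ^ (-(k.val : ℤ)))) := fun k => by ring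
  rw [Finset.sum_congr rfl (fun k _ => h k), Finset.sum_add_distrib, ← Finset.mul_sum]
  ring

lemma ppC_add_smul_re {n : ℕ} (p d : Fin (n + 1) → ℝ) (t : ℝ) (z : ℂ) :
    (ppC (fun k => p k + t * d k) z).re = (ppC p z).re + t * (ppC d z).re := by
  rw [ppC_add_smul, Complex.add_re, Complex.re_ofReal_mul]


lemma pairCP_add_smul {n : ℕ} (c p d : Fin (n + 1) → ℝ) (t : ℝ) :
    pairCP c (fun k => p k + t * d k) = pairCP c p + t * pairCP c d := by
  unfold pairCP
  have h : ∀ k : Fin (n + 1), c k * (p k + t * d k) = c k * p k + t * (c k * d k) :=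
    fun k => by ring
  rw [Finset.sum_congr rfl (fun k _ => h k), Finset.sum_add_distrib, ← Finset.mul_sum]
  ring

lemma ppC_single {n : ℕ} (k : Fin (n + 1)) (z : ℂ) :
    ppC (Pi.single k (1 : ℝ)) z
      = z ^ (k.val : ℤ) + z ^ (-(k.val : ℤ)) - (if k = 0 then 1 else 0) := by
  unfold ppC
  have h : ∀ k' : Fin (n + 1), (((Pi.single k 1 : Fin (n+1) → ℝ) k' : ℝ) : ℂ)
      * (z ^ (k'.val : ℤ) + z ^ (-(k'.val : ℤ)))
      = if k' = k then (z ^ (k.val : ℤ) + z ^ (-(k.val : ℤ))) else 0 := by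
    intro k'
    rcases eq_or_ne k' k with h | h
    · subst h; simp [Pi.single_apply]
    · simp [Pi.single_apply, h]
  rw [Finset.sum_congr rfl (fun k' _ => h k'), Finset.sum_ite_eq' Finset.univ k
    (fun _ => (z ^ (k.val : ℤ) + z ^ (-(k.val : ℤ))))]
  simp only [Pi.single_apply, eq_comm]
  split <;> simp

lemma pairCP_single {n : ℕ} (c : Fin (n + 1) → ℝ) (k : Fin (n + 1)) :
    pairCP c (Pi.single k (1 : ℝ)) = 2 * c k - (if k = 0 then c 0 else 0) := by
  unfold pairCP
  have h : ∀ k' : Fin (n + 1), c k' * (Pi.single k 1 : Fin (n+1) → ℝ) k' = if k' = k then c k else 0 := by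
    intro k'
    rcases eq_or_ne k' k with h | h
    · subst h; simp [Pi.single_apply]
    · simp [Pi.single_apply, h]
  rw [Finset.sum_congr rfl (fun k' _ => h k'), Finset.sum_ite_eq' Finset.univ k (fun _ => c k)]
  rcases eq_or_ne k 0 with h | h
  · subst h; simp
  · simp [h, Pi.single_apply, fun hh : (0:Fin (n+1)) = k => h hh.symm]

lemma ppC_re_expand {n : ℕ} (q : Fin (n + 1) → ℝ) (z : ℂ) :
    (ppC q z).re = ∑ k : Fin (n + 1), q k * (z ^ (k.val : ℤ) + z ^ (-(k.val : ℤ))).re - q 0 := by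
  unfold ppC
  rw [Complex.sub_re, Complex.re_sum, Complex.ofReal_re]
  congr 1
  exact Finset.sum_congr rfl fun k _ => Complex.re_ofReal_mul _ _


lemma zeta_pair_re (N : ℕ) (j m : ℤ) :
    (zeta N j ^ m + zeta N j ^ (-m)).re = 2 * (zeta N j ^ m).re := by
  rw [zeta_zpow_neg, Complex.add_re, Complex.conj_re]
  ring

lemma moment_re_of_complex {n N : ℕ} (hN : 0 < N) (c : Fin (n + 1) → ℝ) (Φ : ℤ → ℝ)
    (hmom : ∀ k : Fin (n + 1),
      (∑ j ∈ Idx N, zeta N j ^ (k.val : ℤ) * ((Φ j : ℝ) : ℂ)) / (2 * N) = (c k : ℂ))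
    (k : Fin (n + 1)) :
    ∑ j ∈ Idx N, Φ j * (zeta N j ^ (k.val : ℤ) + zeta N j ^ (-(k.val : ℤ))).re
      = 4 * N * c k := by
  have h2N : ((2 : ℂ) * N) ≠ 0 := by
    simp only [ne_eq, mul_eq_zero, Nat.cast_eq_zero]
    push_neg
    exact ⟨two_ne_zero, hN.ne'⟩
  have h := hmom k
  rw [div_eq_iff h2N] at h
  have hre := congrArg Complex.re h
  rw [Complex.re_sum] at hre
  have hrhs : ((c k : ℂ) * (2 * N)).re = c k * (2 * N) := by
    rw [Complex.mul_re]
    simp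
  rw [hrhs] at hre
  have hre2 : ∑ j ∈ Idx N, (zeta N j ^ (k.val : ℤ)).re * Φ j = c k * (2 * N) := by
    rw [← hre]
    apply Finset.sum_congr rfl
    intro j _
    rw [Complex.mul_re]
    simp
  calc ∑ j ∈ Idx N, Φ j * (zeta N j ^ (k.val : ℤ) + zeta N j ^ (-(k.val : ℤ))).re
      = ∑ j ∈ Idx N, 2 * ((zeta N j ^ (k.val : ℤ)).re * Φ j) := by
        apply Finset.sum_congr rfl
        intro j _
        rw [zeta_pair_re]
        ring
    _ = 2 * ∑ j ∈ Idx N, (zeta N j ^ (k.val : ℤ)).re * Φ j := by rw [Finset.mul_sum]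
    _ = 4 * N * c k := by rw [hre2]; ring

lemma sum_mul_ppC {n N : ℕ} (hN : 0 < N) (c q : Fin (n + 1) → ℝ) (Φ : ℤ → ℝ)
    (hmom : ∀ k : Fin (n + 1),
      (∑ j ∈ Idx N, zeta N j ^ (k.val : ℤ) * ((Φ j : ℝ) : ℂ)) / (2 * N) = (c k : ℂ)) :
    ∑ j ∈ Idx N, Φ j * (ppC q (zeta N j)).re = 2 * N * pairCP c q := by
  have key := moment_re_of_complex hN c Φ hmom
  have h0 : ∑ j ∈ Idx N, Φ j = 2 * N * c 0 := by
    have h := key 0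
    have h' : ∑ j ∈ Idx N, Φ j * (zeta N j ^ ((0:Fin (n+1)).val : ℤ)
        + zeta N j ^ (-((0:Fin (n+1)).val : ℤ))).re = ∑ j ∈ Idx N, Φ j * 2 := by
      apply Finset.sum_congr rfl
      intro j _
      norm_num
    rw [h'] at h
    rw [← Finset.sum_mul] at h
    linarith
  have step1 : ∀ j ∈ Idx N, Φ j * (ppC q (zeta N j)).re
      = (∑ k : Fin (n + 1), q k * (Φ j * (zeta N j ^ (k.val : ℤ)
          + zeta N j ^ (-(k.val : ℤ))).re)) - Φ j * q 0 := by
    intro j _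
    rw [ppC_re_expand, mul_sub, Finset.mul_sum]
    congr 1
    exact Finset.sum_congr rfl fun k _ => by ring
  rw [Finset.sum_congr rfl step1, Finset.sum_sub_distrib, Finset.sum_comm]
  have step2 : ∀ k ∈ (Finset.univ : Finset (Fin (n + 1))),
      ∑ j ∈ Idx N, q k * (Φ j * (zeta N j ^ (k.val : ℤ)
        + zeta N j ^ (-(k.val : ℤ))).re) = q k * (4 * N * c k) := by
    intro k _
    rw [← Finset.mul_sum, key k]
  rw [Finset.sum_congr rfl step2, ← Finset.sum_mul, h0]
  have step3 : ∑ k : Fin (n + 1), q k * (4 * N * c k)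
      = (4 * N) * ∑ k : Fin (n + 1), c k * q k := by
    rw [Finset.mul_sum]
    exact Finset.sum_congr rfl fun k _ => by ring
  rw [step3]
  unfold pairCP
  ring

lemma critical (N n : ℕ) (hN : 0 < N) (c P Qhat : Fin (n + 1) → ℝ)
    (hQmem : memPplus N Qhat)
    (hQmin : ∀ q, memPplus N q → Jdual N c P Qhat ≤ Jdual N c P q)
    (d : Fin (n + 1) → ℝ) :
    pairCP c d = (∑ j ∈ Idx N, (ppC P (zeta N j)).re *
      ((ppC d (zeta N j)).re / (ppC Qhat (zeta N j)).re)) / (2 * N) := by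
  set R := fun j => (ppC P (zeta N j)).re with hR
  set S := fun j => (ppC Qhat (zeta N j)).re with hS
  set D := fun j => (ppC d (zeta N j)).re with hD
  set f : ℝ → ℝ := fun t => pairCP c Qhat + t * pairCP c d
      - (∑ j ∈ Idx N, R j * Real.log (S j + t * D j)) / (2 * N) with hf
  have hfeq : ∀ t, Jdual N c P (fun k => Qhat k + t * d k) = f t := by
    intro t
    unfold Jdual
    rw [pairCP_add_smul]
    congr 2
    apply Finset.sum_congr rfl
    intro j _
    rw [ppC_add_smul_re]
  have h00 : (fun k => Qhat k + (0:ℝ) * d k) = Qhat := by funext k; simp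
  have h0 : Jdual N c P Qhat = f 0 := by rw [← hfeq 0, h00]
  have hlocal : IsLocalMin f 0 := by
    have hev : ∀ᶠ t in nhds (0:ℝ), ∀ j ∈ Idx N, 0 < S j + t * D j := by
      rw [Filter.eventually_all_finset]
      intro j hj
      have hcont : Filter.Tendsto (fun t : ℝ => S j + t * D j) (nhds 0) (nhds (S j)) := by
        have hc : Continuous fun t : ℝ => S j + t * D j := by continuity
        simpa using hc.tendsto 0
      exact hcont.eventually (eventually_gt_nhds (hQmem j hj))
    refine hev.mono ?_
    intro t ht
    have hmem : memPplus N (fun k => Qhat k + t * d k) := by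
      intro j hj
      rw [ppC_add_smul_re]
      exact ht j hj
    have h := hQmin _ hmem
    rw [hfeq t] at h
    rw [← h0]
    exact h
  have hderiv : HasDerivAt f (pairCP c d - (∑ j ∈ Idx N, R j * (D j / S j)) / (2 * N)) 0 := by
    have hsum : HasDerivAt (fun t => ∑ j ∈ Idx N, R j * Real.log (S j + t * D j))
        (∑ j ∈ Idx N, R j * (D j / S j)) 0 := by
      apply HasDerivAt.fun_sum
      intro j hj
      have h1 : HasDerivAt (fun t : ℝ => S j + t * D j) (D j) 0 := by
        simpa using ((hasDerivAt_id (0:ℝ)).mul_const (D j)).const_add (S j)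
      have hne : S j + (0:ℝ) * D j ≠ 0 := by
        simpa using (hQmem j hj).ne'
      have h2 := h1.log hne
      have h3 := h2.const_mul (R j)
      convert h3 using 1
      · rfl
      simp
    have hlin : HasDerivAt (fun t : ℝ => pairCP c Qhat + t * pairCP c d) (pairCP c d) 0 := by
      simpa using ((hasDerivAt_id (0:ℝ)).mul_const (pairCP c d)).const_add (pairCP c Qhat)
    exact hlin.sub (hsum.div_const (2 * N))
  have hz := hlocal.deriv_eq_zero
  rw [hderiv.deriv] at hz
  have : pairCP c d = (∑ j ∈ Idx N, R j * (D j / S j)) / (2 * N) := by linarith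
  rw [this]


lemma sum_phihat (N n : ℕ) (hN : 0 < N) (c P Qhat : Fin (n + 1) → ℝ)
    (hQmem : memPplus N Qhat)
    (hQmin : ∀ q, memPplus N q → Jdual N c P Qhat ≤ Jdual N c P q) :
    ∑ j ∈ Idx N, (ppC P (zeta N j)).re / (ppC Qhat (zeta N j)).re = 2 * N * c 0 := by
  have hk := critical N n hN c P Qhat hQmem hQmin (Pi.single 0 1)
  rw [pairCP_single] at hk
  norm_num at hk
  have hc : ∀ j ∈ Idx N, (ppC P (zeta N j)).re
      * ((ppC (Pi.single 0 1 : Fin (n+1) → ℝ) (zeta N j)).re / (ppC Qhat (zeta N j)).re)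
      = (ppC P (zeta N j)).re / (ppC Qhat (zeta N j)).re := by
    intro j _
    rw [ppC_single]
    norm_num
    rw [div_eq_mul_inv]
  rw [Finset.sum_congr rfl hc] at hk
  have h2N : (0:ℝ) < 2 * N := by positivity
  rw [eq_div_iff h2N.ne'] at hk
  linarith

lemma moment_phihat (N n : ℕ) (hN : 0 < N) (c P Qhat : Fin (n + 1) → ℝ)
    (hQmem : memPplus N Qhat)
    (hQmin : ∀ q, memPplus N q → Jdual N c P Qhat ≤ Jdual N c P q) (k : Fin (n + 1)) :
    ∑ j ∈ Idx N, ((ppC P (zeta N j)).re / (ppC Qhat (zeta N j)).re)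
      * (zeta N j ^ (k.val : ℤ) + zeta N j ^ (-(k.val : ℤ))).re = 4 * N * c k := by
  have hk := critical N n hN c P Qhat hQmem hQmin (Pi.single k 1)
  rw [pairCP_single] at hk
  have hc : ∀ j ∈ Idx N, (ppC P (zeta N j)).re
      * ((ppC (Pi.single k 1 : Fin (n+1) → ℝ) (zeta N j)).re / (ppC Qhat (zeta N j)).re)
      = ((ppC P (zeta N j)).re / (ppC Qhat (zeta N j)).re)
          * (zeta N j ^ (k.val : ℤ) + zeta N j ^ (-(k.val : ℤ))).re
        - (if k = 0 then 1 else 0)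
          * ((ppC P (zeta N j)).re / (ppC Qhat (zeta N j)).re) := by
    intro j _
    rw [ppC_single, Complex.sub_re]
    have hite : ((if k = 0 then 1 else 0 : ℂ)).re = (if k = 0 then 1 else 0 : ℝ) := by
      split <;> simp
    rw [hite]
    ring
  rw [Finset.sum_congr rfl hc, Finset.sum_sub_distrib, ← Finset.mul_sum,
    sum_phihat N n hN c P Qhat hQmem hQmin] at hk
  have h2N : (0:ℝ) < 2 * N := by positivity
  rw [eq_div_iff h2N.ne'] at hk
  rcases eq_or_ne k 0 with h | h
  · subst h
    norm_num at hk
    have h2 : ∑ j ∈ Idx N, ((ppC P (zeta N j)).re / (ppC Qhat (zeta N j)).re)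
        * (zeta N j ^ ((0 : Fin (n+1)).val : ℤ)
          + zeta N j ^ (-((0 : Fin (n+1)).val : ℤ))).re
        = ∑ j ∈ Idx N, ((ppC P (zeta N j)).re / (ppC Qhat (zeta N j)).re) * 2 := by
      apply Finset.sum_congr rfl
      intro j _
      norm_num
    rw [h2]
    linarith
  · simp only [if_neg h] at hk
    linarith

lemma zeta_shift (N : ℕ) (hN : 0 < N) (j : ℤ) : zeta N (j + 2 * N) = zeta N j := by
  have := zeta_period N hN j 1
  rwa [mul_one] at this

lemma feas_hat (N n : ℕ) (hN : 0 < N) (c P Qhat : Fin (n + 1) → ℝ)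
    (hP : memPplus N P) (hQmem : memPplus N Qhat)
    (hQmin : ∀ q, memPplus N q → Jdual N c P Qhat ≤ Jdual N c P q) :
    feasibleΦ N c (fun j => (ppC P (zeta N j)).re / (ppC Qhat (zeta N j)).re) := by
  have hzp : ∀ j : ℤ, zeta N (j + 2 * N) = zeta N j := zeta_shift N hN
  have hzneg : ∀ j : ℤ, ∀ p : Fin (n + 1) → ℝ, ppC p (zeta N (-j)) = ppC p (zeta N j) := by
    intro j p
    rw [zeta_neg, ppC_inv]
  have hposall : ∀ j : ℤ, ∀ p : Fin (n + 1) → ℝ, memPplus N p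
      → 0 < (ppC p (zeta N j)).re := by
    intro j p hp
    obtain ⟨j', m, hj', hrep⟩ := exists_rep N hN j
    have hper : ∀ i : ℤ, (ppC p (zeta N (i + 2 * N))).re = (ppC p (zeta N i)).re := by
      intro i; rw [hzp i]
    have := periodic_iter (fun i => (ppC p (zeta N i)).re) N hper j' m
    rw [hrep, this]
    exact hp j' hj'
  refine ⟨?_, ?_, ?_, ?_⟩
  · intro j
    simp only
    rw [hzp j]
  · intro j
    simp only
    rw [hzneg j P, hzneg j Qhat]
  · intro j
    exact div_pos (hposall j P hP) (hposall j Qhat hQmem)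
  · intro k
    have h2N : ((2:ℂ) * N) ≠ 0 := by
      simp only [ne_eq, mul_eq_zero, Nat.cast_eq_zero]
      push_neg
      exact ⟨two_ne_zero, hN.ne'⟩
    rw [div_eq_iff h2N]
    set g : ℤ → ℂ := fun j => zeta N j ^ (k.val : ℤ)
      * (((ppC P (zeta N j)).re / (ppC Qhat (zeta N j)).re : ℝ) : ℂ) with hg
    have hgper : ∀ j : ℤ, g (j + 2 * N) = g j := by
      intro j
      simp only [hg]
      rw [hzp j]
    have hsym := sum_Idx_comp_neg N hN g hgper
    have hneg : ∀ j ∈ Idx N, g (-j) = zeta N j ^ (-(k.val : ℤ))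
        * (((ppC P (zeta N j)).re / (ppC Qhat (zeta N j)).re : ℝ) : ℂ) := by
      intro j _
      simp only [hg]
      rw [hzneg j P, hzneg j Qhat, zeta_neg, _root_.inv_zpow']
    rw [Finset.sum_congr rfl hneg] at hsym
    have hdouble : (∑ j ∈ Idx N, g j) + (∑ j ∈ Idx N, g j)
        = ((4 * N * c k : ℝ) : ℂ) := by
      nth_rewrite 1 [← hsym]
      rw [← Finset.sum_add_distrib]
      rw [← moment_phihat N n hN c P Qhat hQmem hQmin k, Complex.ofReal_sum]
      apply Finset.sum_congr rfl
      intro j _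
      have hA : zeta N j ^ (k.val : ℤ) + zeta N j ^ (-(k.val : ℤ))
          = (((zeta N j ^ (k.val : ℤ) + zeta N j ^ (-(k.val : ℤ))).re : ℝ) : ℂ) := by
        nth_rewrite 1 [zeta_zpow_neg]
        rw [Complex.add_conj, zeta_pair_re]
      rw [Complex.ofReal_mul, ← hA]
      ring
    have hfin : (2 : ℂ) * ∑ j ∈ Idx N, g j = ((4 * N * c k : ℝ) : ℂ) := by
      rw [two_mul]
      exact hdouble
    calc ∑ j ∈ Idx N, g j = ((2 : ℂ) * ∑ j ∈ Idx N, g j) / 2 := by ring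
      _ = ((4 * N * c k : ℝ) : ℂ) / 2 := by rw [hfin]
      _ = (c k : ℂ) * (2 * N) := by push_cast; ring


lemma key_ineq (R S φ : ℝ) (hR : 0 < R) (hS : 0 < S) (hφ : 0 < φ) :
    (R * Real.log φ - R * Real.log (R / S) ≤ φ * S - R) ∧
    (φ ≠ R / S → R * Real.log φ - R * Real.log (R / S) < φ * S - R) := by
  have hRS : 0 < R / S := div_pos hR hS
  have hx : 0 < φ / (R / S) := div_pos hφ hRS
  have hlog : Real.log (φ / (R / S)) = Real.log φ - Real.log (R / S) :=
    Real.log_div hφ.ne' hRS.ne'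
  have hmul : R * (φ / (R / S)) = φ * S := by
    field_simp
  constructor
  · have h := Real.log_le_sub_one_of_pos hx
    have h2 := mul_le_mul_of_nonneg_left h hR.le
    rw [hlog] at h2
    calc R * Real.log φ - R * Real.log (R / S)
        = R * (Real.log φ - Real.log (R / S)) := by ring
      _ ≤ R * (φ / (R / S) - 1) := h2
      _ = R * (φ / (R / S)) - R := by ring
      _ = φ * S - R := by rw [hmul]
  · intro hne
    have hx1 : φ / (R / S) ≠ 1 := by
      intro hcontra
      exact hne ((div_eq_one_iff_eq hRS.ne').mp hcontra)
    have h := Real.log_lt_sub_one_of_pos hx hx1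
    have h2 := mul_lt_mul_of_pos_left h hR
    rw [hlog] at h2
    calc R * Real.log φ - R * Real.log (R / S)
        = R * (Real.log φ - Real.log (R / S)) := by ring
      _ < R * (φ / (R / S) - 1) := h2
      _ = R * (φ / (R / S)) - R := by ring
      _ = φ * S - R := by rw [hmul]

end StmtAux

/-- among all positive symmetric functions on `𝕋_{2N}` matching the
moments `c`, the generalized entropy `𝕀_P` is maximized, uniquely, by `Φ = P/Q̂`, where
`Q̂` is the minimizer of the dual functional `𝕁_P` over `𝔓₊(N)`. -/
theorem stmt2 (N n : ℕ) (hn : 1 ≤ n) (hNn : n < N)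
    (c P Qhat : Fin (n + 1) → ℝ) (hc : memCplus N c) (hP : memPplus N P)
    (hQmem : memPplus N Qhat)
    (hQmin : ∀ q, memPplus N q → Jdual N c P Qhat ≤ Jdual N c P q) :
    feasibleΦ N c (fun j => (ppC P (zeta N j)).re / (ppC Qhat (zeta N j)).re) ∧
    ∀ Φ : ℤ → ℝ, feasibleΦ N c Φ →
      entropyP N P Φ ≤
        entropyP N P (fun j => (ppC P (zeta N j)).re / (ppC Qhat (zeta N j)).re) ∧
      (entropyP N P Φ =
          entropyP N P (fun j => (ppC P (zeta N j)).re / (ppC Qhat (zeta N j)).re) →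
        Φ = fun j => (ppC P (zeta N j)).re / (ppC Qhat (zeta N j)).re) := by
  have hN : 0 < N := lt_of_le_of_lt (Nat.zero_le n) hNn
  set Φh : ℤ → ℝ := fun j => (ppC P (zeta N j)).re / (ppC Qhat (zeta N j)).re with hΦh
  have hfeas := StmtAux.feas_hat N n hN c P Qhat hP hQmem hQmin
  refine ⟨hfeas, ?_⟩
  intro Φ hΦ
  obtain ⟨hper, hsymm, hpos, hmom⟩ := hΦ
  obtain ⟨hper0, hsymm0, hpos0, hmom0⟩ := hfeas
  have h2N : (0:ℝ) < 2 * N := by positivity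
  have hsum1 : ∑ j ∈ Idx N, Φ j * (ppC Qhat (zeta N j)).re = 2 * N * pairCP c Qhat :=
    StmtAux.sum_mul_ppC hN c Qhat Φ hmom
  have hsum2 : ∑ j ∈ Idx N, Φh j * (ppC Qhat (zeta N j)).re = 2 * N * pairCP c Qhat :=
    StmtAux.sum_mul_ppC hN c Qhat Φh hmom0
  have hPhS : ∀ j ∈ Idx N, Φh j * (ppC Qhat (zeta N j)).re = (ppC P (zeta N j)).re := by
    intro j hj
    simp only [hΦh]
    exact div_mul_cancel₀ _ (hQmem j hj).ne'
  have hsumR : ∑ j ∈ Idx N, (ppC P (zeta N j)).re = 2 * N * pairCP c Qhat := by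
    rw [← hsum2]
    exact (Finset.sum_congr rfl hPhS).symm
  set T : ℤ → ℝ := fun j => (Φ j * (ppC Qhat (zeta N j)).re - (ppC P (zeta N j)).re)
      - ((ppC P (zeta N j)).re * Real.log (Φ j)
        - (ppC P (zeta N j)).re * Real.log (Φh j)) with hT
  have hkey : ∀ j ∈ Idx N, (ppC P (zeta N j)).re * Real.log (Φ j)
        - (ppC P (zeta N j)).re * Real.log (Φh j)
      ≤ Φ j * (ppC Qhat (zeta N j)).re - (ppC P (zeta N j)).re :=
    fun j hj =>
      (StmtAux.key_ineq (ppC P (zeta N j)).re (ppC Qhat (zeta N j)).re (Φ j)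
        (hP j hj) (hQmem j hj) (hpos j)).1
  have hT0 : ∀ j ∈ Idx N, 0 ≤ T j := by
    intro j hj
    have := hkey j hj
    simp only [hT]
    linarith
  have hTsum : ∑ j ∈ Idx N, T j
      = (∑ j ∈ Idx N, (ppC P (zeta N j)).re * Real.log (Φh j))
        - ∑ j ∈ Idx N, (ppC P (zeta N j)).re * Real.log (Φ j) := by
    simp only [hT]
    rw [Finset.sum_sub_distrib, Finset.sum_sub_distrib, Finset.sum_sub_distrib,
      hsum1, hsumR]
    ring
  have hXY : ∑ j ∈ Idx N, (ppC P (zeta N j)).re * Real.log (Φ j)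
      ≤ ∑ j ∈ Idx N, (ppC P (zeta N j)).re * Real.log (Φh j) := by
    have := Finset.sum_nonneg hT0
    linarith [hTsum]
  constructor
  · unfold entropyP
    exact (div_le_div_iff_of_pos_right h2N).mpr hXY
  · intro heq
    unfold entropyP at heq
    rw [div_eq_div_iff h2N.ne' h2N.ne'] at heq
    have hXYeq : ∑ j ∈ Idx N, (ppC P (zeta N j)).re * Real.log (Φ j)
        = ∑ j ∈ Idx N, (ppC P (zeta N j)).re * Real.log (Φh j) :=
      mul_right_cancel₀ h2N.ne' heq
    have hTzero : ∑ j ∈ Idx N, T j = 0 := by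
      rw [hTsum, hXYeq]
      ring
    have hTall := (Finset.sum_eq_zero_iff_of_nonneg hT0).mp hTzero
    have hIdxeq : ∀ j ∈ Idx N, Φ j = Φh j := by
      intro j hj
      by_contra hne
      have hne' : Φ j ≠ (ppC P (zeta N j)).re / (ppC Qhat (zeta N j)).re := by
        simpa only [hΦh] using hne
      have hstrict := (StmtAux.key_ineq (ppC P (zeta N j)).re (ppC Qhat (zeta N j)).re
        (Φ j) (hP j hj) (hQmem j hj) (hpos j)).2 hne'
      have hTj := hTall j hj
      simp only [hT] at hTj
      have hΦhj : Real.log (Φh j)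
          = Real.log ((ppC P (zeta N j)).re / (ppC Qhat (zeta N j)).re) := by
        simp only [hΦh]
      rw [hΦhj] at hTj
      linarith
    funext j
    obtain ⟨j', m, hj', hrep⟩ := StmtAux.exists_rep N hN j
    have h1 := StmtAux.periodic_iter Φ N hper j' m
    have h2 := StmtAux.periodic_iter Φh N hper0 j' m
    show Φ j = Φh j
    rw [hrep, h1, h2]
    exact hIdxeq j' hj'


end
end
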